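/- arXiv:1209.3298 — 6 statements merged into one kernel-verified Lean document; each statement's English description precedes it below -/
import Mathlib

section
/- Every nonnegative binary form is a sum of two squares: if F ∈ ℝ[x,y] is homogeneous of degree 2d and F(a,b) ≥ 0 for all (a,b) ∈ ℝ², then there exist polynomials G, H ∈ ℝ[x,y], each either zero or homogeneous of degree d, such that F = G² + H². -/
section UnivariateAux
open Polynomial


/-- Key univariate lemma: a nonnegative real polynomial is a sum of two squares. -/
theorem poly_nonneg_sum_two_squares :
    ∀ n : ℕ, ∀ f : ℝ[X], f.natDegree ≤ n → (∀ x : ℝ, 0 ≤ f.eval x) →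
      ∃ p q : ℝ[X], f = p ^ 2 + q ^ 2 := by
  intro n
  induction n using Nat.strong_induction_on with
  | _ n IH =>
  intro f hdeg hpos
  rcases eq_or_ne f 0 with rfl | hf0
  · exact ⟨0, 0, by ring⟩
  rcases Nat.eq_zero_or_pos f.natDegree with h0 | hdpos
  · refine ⟨C (Real.sqrt (f.coeff 0)), 0, ?_⟩
    have hc : 0 ≤ f.coeff 0 := by
      have := hpos 0
      rwa [← Polynomial.coeff_zero_eq_eval_zero] at this
    conv_lhs => rw [Polynomial.eq_C_of_natDegree_eq_zero h0]
    rw [← C_pow, sq, Real.mul_self_sqrt hc]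
    ring
  · set g := f.map (algebraMap ℝ ℂ) with hgdef
    have hg : 0 < g.degree := by
      rw [hgdef, Polynomial.degree_map_eq_of_injective (algebraMap ℝ ℂ).injective]
      exact Polynomial.natDegree_pos_iff_degree_pos.mp hdpos
    obtain ⟨z, hz⟩ := Complex.exists_root hg
    by_cases him : z.im = 0
    · -- real root case
      have hzr : z = (z.re : ℂ) := Complex.ext rfl (by simp [him])
      have hr : f.IsRoot z.re := by
        have h1 : g.eval ((algebraMap ℝ ℂ) z.re) = 0 := by
          rw [Complex.coe_algebraMap, ← hzr]; exact hz
        rw [hgdef, Polynomial.eval_map, Polynomial.eval₂_at_apply,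
          Complex.coe_algebraMap, Complex.ofReal_eq_zero] at h1
        exact h1
      -- the derivative also vanishes at the minimum z.re
      have hd1 : f.derivative.eval z.re = 0 := by
        have hloc : IsLocalMin (fun x => f.eval x) z.re :=
          Filter.Eventually.of_forall fun x => by
            simpa [hr.eq_zero] using hpos x
        exact hloc.hasDerivAt_eq_zero (f.hasDerivAt z.re)
      -- hence (X - C z.re)^2 divides f
      obtain ⟨h1, hh1⟩ : (X - C z.re) ^ 2 ∣ f := by
        obtain ⟨u, hu⟩ := (dvd_iff_isRoot (p := f)).2 hr
        have hu' : u.eval z.re = 0 := by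
          have := hd1
          rw [hu, derivative_mul] at this
          simpa [hr.eq_zero] using this
        obtain ⟨v, hv⟩ := (dvd_iff_isRoot (p := u)).2 hu'
        exact ⟨v, by rw [hu, hv]; ring⟩
      have hne0 : h1 ≠ 0 := fun h => hf0 (by rw [hh1, h, mul_zero])
      have hpos1 : ∀ x : ℝ, 0 ≤ h1.eval x := by
        have hne : ∀ x : ℝ, x ≠ z.re → 0 ≤ h1.eval x := by
          intro x hx
          have h2 := hpos x
          rw [hh1] at h2
          have h3 : (0:ℝ) < ((X - C z.re) ^ 2 : ℝ[X]).eval x := by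
            have : x - z.re ≠ 0 := sub_ne_zero.mpr hx
            simp only [eval_pow, eval_sub, eval_X, eval_C]
            positivity
          rw [eval_mul, mul_comm] at h2
          exact nonneg_of_mul_nonneg_left h2 h3
        intro x
        rcases eq_or_ne x z.re with heq | hx
        · have htd : Filter.Tendsto (fun y => h1.eval y) (nhdsWithin x {x}ᶜ)
              (nhds (h1.eval x)) :=
            (h1.continuous.tendsto x).mono_left nhdsWithin_le_nhds
          refine ge_of_tendsto htd ?_
          filter_upwards [self_mem_nhdsWithin] with y hy
          exact hne y (by simpa [heq] using hy)
        · exact hne x hx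
      have hdeg1 : h1.natDegree < n := by
        have h4 : f.natDegree = 2 + h1.natDegree := by
          rw [hh1, Polynomial.natDegree_mul (pow_ne_zero _ (X_sub_C_ne_zero z.re)) hne0,
            Polynomial.natDegree_pow, Polynomial.natDegree_X_sub_C]
        omega
      obtain ⟨p, q, hpq⟩ := IH _ hdeg1 h1 le_rfl hpos1
      exact ⟨(X - C z.re) * p, (X - C z.re) * q, by rw [hh1, hpq]; ring⟩
    · -- nonreal root case
      set s : ℝ[X] := (X - C z.re) ^ 2 + C z.im ^ 2 with hsdef
      have hsmap : s.map (algebraMap ℝ ℂ) =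
          (X - C z) * (X - C ((starRingEnd ℂ) z)) := by
        have hre : ((starRingEnd ℂ) z).re = z.re := Complex.conj_re z
        have h2 : (X - C z) * (X - C ((starRingEnd ℂ) z)) =
            X ^ 2 - C (z + (starRingEnd ℂ) z) * X + C (z * (starRingEnd ℂ) z) := by
          rw [map_add, map_mul]; ring
        rw [h2, Complex.add_conj, Complex.mul_conj]
        simp only [hsdef, Polynomial.map_add, Polynomial.map_sub, Polynomial.map_pow,
          Polynomial.map_X, Polynomial.map_C]
        have h3 : ((algebraMap ℝ ℂ) z.re : ℂ) = (z.re : ℂ) := rfl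
        have h4 : ((algebraMap ℝ ℂ) z.im : ℂ) = (z.im : ℂ) := rfl
        rw [h3, h4]
        have h5 : (Complex.normSq z : ℂ) = (z.re : ℂ) ^ 2 + (z.im : ℂ) ^ 2 := by
          rw [Complex.normSq_apply]; push_cast; ring
        have h6 : ((2 : ℝ) * z.re : ℂ) = 2 * (z.re : ℂ) := by push_cast; ring
        rw [h5]
        rw [show (C (((2 * z.re : ℝ)) : ℂ) : ℂ[X]) = 2 * C (z.re:ℂ) by
            rw [Complex.ofReal_mul, Complex.ofReal_ofNat, map_mul, map_ofNat],
          show (C ((z.re:ℂ)^2 + (z.im:ℂ)^2) : ℂ[X]) = C (z.re:ℂ)^2 + C (z.im:ℂ)^2 by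
            rw [map_add, map_pow, map_pow]]
        ring
      have hdvd : s ∣ f := by
        rw [← Polynomial.map_dvd_map' (algebraMap ℝ ℂ), hsmap]
        have hcop : IsCoprime (X - C z : ℂ[X]) (X - C ((starRingEnd ℂ) z)) := by
          apply Polynomial.isCoprime_X_sub_C_of_isUnit_sub
          rw [isUnit_iff_ne_zero, sub_ne_zero]
          intro h
          exact him (Complex.conj_eq_iff_im.mp h.symm)
        refine IsCoprime.mul_dvd hcop ((dvd_iff_isRoot).2 hz) ((dvd_iff_isRoot).2 ?_)
        have hconj : (starRingEnd ℂ) (g.eval z) = g.eval ((starRingEnd ℂ) z) := by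
          rw [hgdef, Polynomial.eval_map, Polynomial.eval_map, Polynomial.hom_eval₂]
          congr 1
          exact RingHom.ext fun r => Complex.conj_ofReal r
        rw [Polynomial.IsRoot, ← hconj, hz.eq_zero, map_zero]
      obtain ⟨h1, hh1⟩ := hdvd
      have hspos : ∀ x : ℝ, 0 < s.eval x := by
        intro x
        have h7 : (0:ℝ) < z.im ^ 2 := by positivity
        simp only [hsdef, eval_add, eval_pow, eval_sub, eval_X, eval_C]
        nlinarith [sq_nonneg (x - z.re)]
      have hne0 : h1 ≠ 0 := fun h => hf0 (by rw [hh1, h, mul_zero])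
      have hs0 : s ≠ 0 := fun h => by simpa [h] using hspos 0
      have hpos1 : ∀ x : ℝ, 0 ≤ h1.eval x := by
        intro x
        have h2 := hpos x
        rw [hh1, eval_mul, mul_comm] at h2
        exact nonneg_of_mul_nonneg_left h2 (hspos x)
      have hsdeg : s.natDegree = 2 := by
        rw [hsdef]
        compute_degree!
      have hdeg1 : h1.natDegree < n := by
        have h4 : f.natDegree = 2 + h1.natDegree := by
          rw [hh1, Polynomial.natDegree_mul hs0 hne0, hsdeg]
        omega
      obtain ⟨p, q, hpq⟩ := IH _ hdeg1 h1 le_rfl hpos1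
      refine ⟨(X - C z.re) * p - C z.im * q, (X - C z.re) * q + C z.im * p, ?_⟩
      rw [hh1, hpq, hsdef]
      ring


open Polynomial in
/-- coefficient of a square at twice an upper bound of the degree -/
theorem coeff_sq_two_mul {p : ℝ[X]} {k : ℕ} (h : p.natDegree ≤ k) :
    (p ^ 2).coeff (k + k) = p.coeff k ^ 2 := by
  rw [sq, Polynomial.coeff_mul]
  rw [Finset.sum_eq_single (k, k)]
  · rw [sq]
  · rintro ⟨i, j⟩ hij hne
    rw [Finset.HasAntidiagonal.mem_antidiagonal] at hij
    simp only [Prod.fst, Prod.snd] at hij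
    have hik' : i ≠ k := fun hik => hne (by simp [Prod.ext_iff, hik]; omega)
    rcases lt_or_gt_of_ne hik' with hik | hik
    · have : k < j := by omega
      rw [Polynomial.coeff_eq_zero_of_natDegree_lt (lt_of_le_of_lt h this), mul_zero]
    · rw [Polynomial.coeff_eq_zero_of_natDegree_lt (lt_of_le_of_lt h hik), zero_mul]
  · intro hk
    simp [Finset.HasAntidiagonal.mem_antidiagonal] at hk

open Polynomial in
/-- degree bound for the summands of a sum of two squares -/
theorem natDegree_le_of_sq_add_sq {p q f : ℝ[X]} {d : ℕ} (hf : f = p ^ 2 + q ^ 2)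
    (hd : f.natDegree ≤ 2 * d) : p.natDegree ≤ d := by
  by_contra hcon
  push_neg at hcon
  set k := max p.natDegree q.natDegree with hk
  have hdk : d < k := lt_of_lt_of_le hcon (le_max_left _ _)
  have hpk : p.natDegree ≤ k := le_max_left _ _
  have hqk : q.natDegree ≤ k := le_max_right _ _
  have hco : f.coeff (k + k) = p.coeff k ^ 2 + q.coeff k ^ 2 := by
    rw [hf, Polynomial.coeff_add, coeff_sq_two_mul hpk, coeff_sq_two_mul hqk]
  have hzero : f.coeff (k + k) = 0 :=
    Polynomial.coeff_eq_zero_of_natDegree_lt (by omega)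
  have hpq0 : p.coeff k = 0 ∧ q.coeff k = 0 := by
    rw [hzero] at hco
    constructor <;> nlinarith [sq_nonneg (p.coeff k), sq_nonneg (q.coeff k)]
  have hp0 : p ≠ 0 := by
    intro h
    rw [h, Polynomial.natDegree_zero] at hcon
    omega
  rcases max_cases p.natDegree q.natDegree with ⟨h1, _⟩ | ⟨h1, h2⟩
  · refine Polynomial.leadingCoeff_ne_zero.mpr hp0 ?_
    have := hpq0.1
    rwa [hk, h1] at this
  · have hq0 : q ≠ 0 := by
      intro h
      rw [h, Polynomial.natDegree_zero] at h2
      omega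
    refine Polynomial.leadingCoeff_ne_zero.mpr hq0 ?_
    have := hpq0.2
    rwa [hk, h1] at this



/-- homogenization of a univariate polynomial to degree `n` -/
noncomputable def homog (n : ℕ) (p : Polynomial ℝ) : MvPolynomial (Fin 2) ℝ :=
  ∑ i ∈ p.support, MvPolynomial.C (p.coeff i) * MvPolynomial.X 0 ^ i * MvPolynomial.X 1 ^ (n - i)

theorem homog_isHomogeneous {n : ℕ} {p : Polynomial ℝ} (h : p.natDegree ≤ n) :
    (homog n p).IsHomogeneous n := by
  apply MvPolynomial.IsHomogeneous.sum
  intro i hi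
  have hin : i ≤ n := le_trans (Polynomial.le_natDegree_of_mem_supp i hi) h
  have h1 : (MvPolynomial.C (p.coeff i) * MvPolynomial.X (0 : Fin 2) ^ i *
      MvPolynomial.X 1 ^ (n - i)).IsHomogeneous (0 + i + (n - i)) :=
    ((MvPolynomial.isHomogeneous_C _ _).mul (MvPolynomial.isHomogeneous_X_pow _ _)).mul
      (MvPolynomial.isHomogeneous_X_pow _ _)
  have h2 : 0 + i + (n - i) = n := by omega
  rwa [h2] at h1

theorem eval_homog {n : ℕ} {p : Polynomial ℝ} (h : p.natDegree ≤ n) (a b : ℝ) (hb : b ≠ 0) :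
    MvPolynomial.eval ![a, b] (homog n p) = b ^ n * p.eval (a / b) := by
  rw [homog, map_sum, Polynomial.eval_eq_sum, Polynomial.sum_def, Finset.mul_sum]
  refine Finset.sum_congr rfl fun i hi => ?_
  have hin : i ≤ n := le_trans (Polynomial.le_natDegree_of_mem_supp i hi) h
  simp only [map_mul, map_pow, MvPolynomial.eval_C, MvPolynomial.eval_X]
  rw [Matrix.cons_val_zero, Matrix.cons_val_one, Matrix.cons_val_zero]
  rw [div_pow]
  field_simp
  have hbb : b ^ (n - i) * b ^ i = b ^ n := by rw [← pow_add]; congr 1; omega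
  calc p.coeff i * a ^ i * b ^ (n - i) * b ^ i
      = b ^ (n - i) * b ^ i * (p.coeff i * a ^ i) := by ring
    _ = b ^ n * (p.coeff i * a ^ i) := by rw [hbb]
    _ = p.coeff i * a ^ i * b ^ n := by ring

theorem eval_smul_of_isHomogeneous {n : ℕ} {F : MvPolynomial (Fin 2) ℝ}
    (hF : F.IsHomogeneous n) (c : ℝ) (x : Fin 2 → ℝ) :
    MvPolynomial.eval (fun i => c * x i) F = c ^ n * MvPolynomial.eval x F := by
  conv_lhs => rw [F.as_sum]
  conv_rhs => rw [F.as_sum]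
  rw [map_sum, map_sum, Finset.mul_sum]
  refine Finset.sum_congr rfl fun m hm => ?_
  have hdm : m.degree = n := by
    by_contra hne
    exact (MvPolynomial.mem_support_iff.mp hm) (hF.coeff_eq_zero hne)
  rw [MvPolynomial.eval_monomial, MvPolynomial.eval_monomial]
  rw [Finsupp.prod, Finsupp.prod]
  have h1 : ∏ i ∈ m.support, (c * x i) ^ m i =
      (∏ i ∈ m.support, c ^ m i) * ∏ i ∈ m.support, x i ^ m i := by
    rw [← Finset.prod_mul_distrib]
    exact Finset.prod_congr rfl fun i _ => mul_pow c (x i) (m i)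
  rw [h1, Finset.prod_pow_eq_pow_sum]
  rw [show ∑ i ∈ m.support, m i = m.degree from rfl, hdm]
  ring

/-- evaluation of a bivariate `aeval` into `ℝ[X]` -/
theorem eval_aeval_poly (g : Fin 2 → Polynomial ℝ) (F : MvPolynomial (Fin 2) ℝ) (b : ℝ) :
    Polynomial.eval b (MvPolynomial.aeval g F) =
      MvPolynomial.eval (fun i => Polynomial.eval b (g i)) F := by
  induction F using MvPolynomial.induction_on with
  | C r => simp [Polynomial.algebraMap_eq]
  | add p q hp hq => simp [hp, hq]
  | mul_X p i hp => simp [hp]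

end UnivariateAux

open MvPolynomial

/-- Every nonnegative binary form of degree `2d` is a sum of two squares of
forms of degree `d` (each of which may be zero). -/
theorem nonneg_binary_form_sum_two_squares (d : ℕ) (F : MvPolynomial (Fin 2) ℝ)
    (hF : F.IsHomogeneous (2 * d))
    (hpos : ∀ x : Fin 2 → ℝ, 0 ≤ eval x F) :
    ∃ G H : MvPolynomial (Fin 2) ℝ,
      (G = 0 ∨ G.IsHomogeneous d) ∧ (H = 0 ∨ H.IsHomogeneous d) ∧
      F = G ^ 2 + H ^ 2 := by
  classical
  set f : Polynomial ℝ := MvPolynomial.aeval ![Polynomial.X, 1] F with hfdef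
  have heval1 : ∀ t : ℝ, f.eval t = MvPolynomial.eval ![t, 1] F := by
    intro t
    have harg : (fun i => Polynomial.eval t ((![Polynomial.X, 1] :
        Fin 2 → Polynomial ℝ) i)) = ![t, 1] := by
      funext i
      fin_cases i <;> simp
    rw [hfdef, eval_aeval_poly, harg]
  have hfpos : ∀ t : ℝ, 0 ≤ f.eval t := fun t => (heval1 t).symm ▸ hpos ![t, 1]
  have hfdeg : f.natDegree ≤ 2 * d := by
    rw [hfdef]
    conv_lhs => rw [F.as_sum]
    rw [map_sum]
    apply Polynomial.natDegree_sum_le_of_forall_le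
    intro m hm
    have hmd : m.degree = 2 * d := by
      by_contra hne
      exact (MvPolynomial.mem_support_iff.mp hm) (hF.coeff_eq_zero hne)
    rw [MvPolynomial.aeval_monomial]
    have hprod : (Finsupp.prod m fun i k => (![Polynomial.X, 1] : Fin 2 → Polynomial ℝ) i ^ k)
        = Polynomial.X ^ (m 0) * 1 ^ (m 1) := by
      rw [Finsupp.prod_fintype _ _ (fun i => pow_zero _), Fin.prod_univ_two]
      simp
    rw [hprod]
    have : (algebraMap ℝ (Polynomial ℝ)) (MvPolynomial.coeff m F) =
        Polynomial.C (MvPolynomial.coeff m F) := rfl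
    rw [this, one_pow, mul_one]
    refine le_trans (Polynomial.natDegree_C_mul_le _ _) ?_
    rw [Polynomial.natDegree_X_pow]
    exact le_trans (Finsupp.le_degree 0 m) (le_of_eq hmd)
  obtain ⟨p, q, hpq⟩ := poly_nonneg_sum_two_squares f.natDegree f le_rfl hfpos
  have hp : p.natDegree ≤ d := natDegree_le_of_sq_add_sq hpq hfdeg
  have hq : q.natDegree ≤ d := natDegree_le_of_sq_add_sq (by rw [hpq]; ring) hfdeg
  refine ⟨homog d p, homog d q, Or.inr (homog_isHomogeneous hp),
    Or.inr (homog_isHomogeneous hq), ?_⟩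
  apply MvPolynomial.funext
  intro x
  set a := x 0 with hadef
  set P : Polynomial ℝ :=
    MvPolynomial.aeval ![Polynomial.C a, Polynomial.X]
      (F - (homog d p) ^ 2 - (homog d q) ^ 2) with hPdef
  have hPeval : ∀ b : ℝ, P.eval b = MvPolynomial.eval ![a, b] F -
      (MvPolynomial.eval ![a, b] (homog d p)) ^ 2 -
      (MvPolynomial.eval ![a, b] (homog d q)) ^ 2 := by
    intro b
    rw [hPdef, map_sub, map_sub, map_pow, map_pow]
    simp only [Polynomial.eval_sub, Polynomial.eval_pow]
    rw [eval_aeval_poly, eval_aeval_poly, eval_aeval_poly]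
    have harg : (fun i => Polynomial.eval b ((![Polynomial.C a, Polynomial.X] :
        Fin 2 → Polynomial ℝ) i)) = ![a, b] := by
      funext i
      fin_cases i <;> simp
    rw [harg]
  have hP0 : P = 0 := by
    apply Polynomial.eq_zero_of_infinite_isRoot
    refine Set.Infinite.mono ?_ (((Set.finite_singleton (0:ℝ)).infinite_compl))
    intro b hb
    have hb' : b ≠ 0 := hb
    simp only [Set.mem_setOf_eq, Polynomial.IsRoot]
    rw [hPeval b]
    have hF2 : MvPolynomial.eval ![a, b] F = b ^ (2 * d) * f.eval (a / b) := by
      have hsc := eval_smul_of_isHomogeneous hF b ![a / b, 1]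
      have harg : (fun i => b * (![a / b, 1] : Fin 2 → ℝ) i) = ![a, b] := by
        funext i
        fin_cases i <;> simp [hb', mul_div_cancel₀, mul_comm]
      rw [harg] at hsc
      rw [hsc, heval1]
    rw [hF2, eval_homog hp a b hb', eval_homog hq a b hb', hpq]
    simp only [Polynomial.eval_add, Polynomial.eval_pow]
    ring
  have hfin := hPeval (x 1)
  rw [hP0, Polynomial.eval_zero] at hfin
  have hx : x = ![x 0, x 1] := by
    funext i
    fin_cases i <;> rfl
  rw [map_add, map_pow, map_pow]
  rw [hx, ← hadef]
  linarith [hfin]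
end

section
/- A nonzero nonnegative quadratic form in n real variables is an extreme point of the cone P_{n,2} of nonnegative quadratic forms if and only if it is the square of a real linear form: for nonzero homogeneous F ∈ ℝ[x₁,…,xₙ] of degree 2 with F(X) ≥ 0 for all X ∈ ℝⁿ, F is extreme in P_{n,2} if and only if there exists α = (α₁,…,αₙ) ∈ ℝⁿ with F = (α₁x₁ + ⋯ + αₙxₙ)². -/
open MvPolynomial

section Aux

open QuadraticMap

lemma aux_exists_single_add {σ : Type*} {d : σ →₀ ℕ} {k : ℕ} (h : d.degree = k + 1) :
    ∃ a e, d = Finsupp.single a 1 + e ∧ e.degree = k := by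
  have hd : d ≠ 0 := by
    intro h0
    rw [h0] at h
    simp at h
  obtain ⟨a, ha⟩ : ∃ a, d a ≠ 0 := by
    by_contra hc
    push_neg at hc
    exact hd (Finsupp.ext fun i => hc i)
  have hle : Finsupp.single a 1 ≤ d := by
    rw [Finsupp.single_le_iff]
    omega
  refine ⟨a, d - Finsupp.single a 1, (add_tsub_cancel_of_le hle).symm, ?_⟩
  have hdd : d.degree = (Finsupp.single a 1).degree + (d - Finsupp.single a 1).degree := by
    conv_lhs => rw [← add_tsub_cancel_of_le hle]
    simp [Finsupp.degree_eq_weight_one, map_add]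
  rw [h] at hdd
  have : (Finsupp.single a 1).degree = 1 := by
    exact Finsupp.degree_single a 1
  omega

lemma aux_degree_two_decomp {σ : Type*} {d : σ →₀ ℕ} (h : d.degree = 2) :
    ∃ a b, d = Finsupp.single a 1 + Finsupp.single b 1 := by
  obtain ⟨a, e, rfl, he⟩ := aux_exists_single_add h
  obtain ⟨b, e', rfl, he'⟩ := aux_exists_single_add he
  rw [Finsupp.degree_eq_zero_iff] at he'
  exact ⟨a, b, by rw [he', add_zero]⟩

noncomputable def auxProjBilin {n : ℕ} (a b : Fin n) : LinearMap.BilinMap ℝ (Fin n → ℝ) ℝ :=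
  LinearMap.mk₂ ℝ (fun x y => x a * y b)
    (fun x x' y => by simp [Pi.add_apply]; ring)
    (fun c x y => by simp [Pi.smul_apply, smul_eq_mul]; ring)
    (fun x y y' => by simp [Pi.add_apply]; ring)
    (fun c x y => by simp [Pi.smul_apply, smul_eq_mul]; ring)

lemma aux_prod_pow_single {n : ℕ} (x : Fin n → ℝ) (a : Fin n) :
    ∏ i, x i ^ (Finsupp.single a 1) i = x a := by
  rw [Finset.prod_eq_single_of_mem a (Finset.mem_univ a)]
  · simp
  · intro i _ hi
    simp [Finsupp.single_apply, Ne.symm hi]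

lemma aux_exists_quadratic {n : ℕ} (F : MvPolynomial (Fin n) ℝ) (hF : F.IsHomogeneous 2) :
    ∃ Q : QuadraticForm ℝ (Fin n → ℝ), ∀ x, Q x = eval x F := by
  have hdeg : ∀ d ∈ F.support, ∃ a b : Fin n, d = Finsupp.single a 1 + Finsupp.single b 1 := by
    intro d hd
    refine aux_degree_two_decomp ?_
    have := hF (mem_support_iff.mp hd)
    rw [Finsupp.degree_eq_weight_one]; exact this
  choose a b hab using hdeg
  refine ⟨∑ d ∈ F.support.attach,
      (coeff d.1 F) • (auxProjBilin (a d.1 d.2) (b d.1 d.2)).toQuadraticMap, fun x => ?_⟩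
  rw [eval_eq, ← Finset.sum_attach F.support]
  rw [QuadraticMap.sum_apply]
  refine Finset.sum_congr rfl fun d _ => ?_
  rw [QuadraticMap.smul_apply, LinearMap.BilinMap.toQuadraticMap_apply]
  have h1 : ∏ i ∈ d.1.support, x i ^ d.1 i = ∏ i, x i ^ d.1 i := by
    refine Finset.prod_subset (Finset.subset_univ _) fun i _ hi => ?_
    simp [Finsupp.notMem_support_iff.mp hi]
  have h2 : (∏ i, x i ^ d.1 i) = x (a d.1 d.2) * x (b d.1 d.2) := by
    conv_lhs => rw [hab d.1 d.2]
    simp only [Finsupp.add_apply, pow_add, Finset.prod_mul_distrib, aux_prod_pow_single]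
  rw [h1, h2]
  simp [auxProjBilin, smul_eq_mul]

lemma aux_cs {n : ℕ} (Q : QuadraticForm ℝ (Fin n → ℝ)) (hq : ∀ x, 0 ≤ Q x)
    (x y : Fin n → ℝ) : polar Q x y ^ 2 ≤ 4 * Q x * Q y := by
  have h : ∀ t : ℝ, 0 ≤ Q y * (t * t) + polar Q x y * t + Q x := by
    intro t
    have h0 := hq (t • y + x)
    rw [QuadraticMap.map_add Q, polar_smul_left, QuadraticMap.map_smul] at h0
    rw [polar_comm] at h0
    simpa [smul_eq_mul, mul_comm, mul_assoc, mul_left_comm, add_comm, add_assoc, add_left_comm]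
      using h0
  have := discrim_le_zero h
  rw [discrim] at this
  nlinarith [this]

lemma aux_key {n : ℕ} (α : Fin n → ℝ) (F₁ : MvPolynomial (Fin n) ℝ) (h₁ : F₁.IsHomogeneous 2)
    (hp₁ : ∀ x, 0 ≤ eval x F₁) (v : Fin n → ℝ) (hv : (∑ i, α i * v i) ≠ 0)
    (hker : ∀ x, (∑ i, α i * x i) = 0 → eval x F₁ = 0) (x : Fin n → ℝ) :
    eval x F₁ = (eval v F₁ / (∑ i, α i * v i) ^ 2) * (∑ i, α i * x i) ^ 2 := by
  obtain ⟨Q, hQ⟩ := aux_exists_quadratic F₁ h₁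
  have hqn : ∀ z, 0 ≤ Q z := fun z => (hQ z).symm ▸ hp₁ z
  set t : ℝ := (∑ i, α i * x i) / (∑ i, α i * v i) with ht
  set y : Fin n → ℝ := x - t • v with hy
  have hty : (∑ i, α i * (t * v i)) = t * ∑ i, α i * v i := by
    rw [Finset.mul_sum]
    exact Finset.sum_congr rfl fun i _ => by ring
  have hly : (∑ i, α i * y i) = 0 := by
    simp only [hy, Pi.sub_apply, Pi.smul_apply, smul_eq_mul, mul_sub,
      Finset.sum_sub_distrib, hty]
    rw [ht, div_mul_cancel₀ _ hv, sub_self]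
  have hQy : Q y = 0 := by rw [hQ]; exact hker y hly
  have hpolar : polar Q y (t • v) = 0 := by
    have h1 := aux_cs Q hqn y (t • v)
    rw [hQy] at h1
    have h2 : polar (⇑Q) y (t • v) ^ 2 ≤ 0 := by linarith [h1]
    have := sq_nonneg (polar (⇑Q) y (t • v))
    nlinarith
  have hx : x = y + t • v := by rw [hy, sub_add_cancel]
  have hQx : Q x = t ^ 2 * Q v := by
    rw [hx, QuadraticMap.map_add Q, hQy, QuadraticMap.map_smul, hpolar, smul_eq_mul]
    ring
  have hlx : (∑ i, α i * x i) = t * (∑ i, α i * v i) := by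
    rw [ht, div_mul_cancel₀ _ hv]
  rw [← hQ, ← hQ, hQx, hlx]
  field_simp

end Aux

/-- A nonzero nonnegative quadratic form is an extreme point of the cone of
nonnegative quadratic forms iff it is the square of a real linear form. -/
theorem quadratic_extreme_iff_square_of_linear (n : ℕ)
    (F : MvPolynomial (Fin n) ℝ) (hF0 : F ≠ 0)
    (hF : F.IsHomogeneous 2)
    (hpos : ∀ x : Fin n → ℝ, 0 ≤ eval x F) :
    (∀ F₁ F₂ : MvPolynomial (Fin n) ℝ,
      F₁.IsHomogeneous 2 → F₂.IsHomogeneous 2 →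
      (∀ x : Fin n → ℝ, 0 ≤ eval x F₁) → (∀ x : Fin n → ℝ, 0 ≤ eval x F₂) →
      F = F₁ + F₂ →
      ∃ c₁ c₂ : ℝ, 0 ≤ c₁ ∧ 0 ≤ c₂ ∧ F₁ = c₁ • F ∧ F₂ = c₂ • F) ↔
    ∃ α : Fin n → ℝ, F = (∑ i, C (α i) * X i) ^ 2 := by
  constructor
  · -- extreme → square of linear
    intro hext
    obtain ⟨Q, hQ⟩ := aux_exists_quadratic F hF
    have hqn : ∀ z, 0 ≤ Q z := fun z => (hQ z).symm ▸ hpos z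
    obtain ⟨v, hv⟩ : ∃ v, eval v F ≠ 0 := by
      by_contra hc
      push_neg at hc
      exact hF0 (MvPolynomial.funext fun x => by rw [hc x, map_zero])
    have hc : 0 < eval v F := lt_of_le_of_ne (hpos v) (Ne.symm hv)
    have hQv : 0 < Q v := by rw [hQ]; exact hc
    set s : ℝ := Real.sqrt (Q v) with hs
    have hs0 : 0 < s := Real.sqrt_pos.mpr hQv
    have hs2 : s ^ 2 = Q v := Real.sq_sqrt hQv.le
    set α : Fin n → ℝ := fun i => QuadraticMap.polar Q v (Pi.single i 1) / (2 * s) with hα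
    set L : MvPolynomial (Fin n) ℝ := ∑ i, C (α i) * X i with hL
    have hevalL : ∀ x, eval x L = QuadraticMap.polar Q v x / (2 * s) := by
      intro x
      have hx : x = ∑ i, x i • (Pi.single i (1 : ℝ) : Fin n → ℝ) := by
        have h1 : ∀ i, x i • (Pi.single i (1 : ℝ) : Fin n → ℝ) = Pi.single i (x i) := by
          intro i
          funext j
          rcases eq_or_ne j i with rfl | hj
          · simp
          · simp [Pi.single_apply, hj]
        simp_rw [h1]
        exact (Finset.univ_sum_single x).symm
      have hpol : QuadraticMap.polar Q v x
          = ∑ i, x i * QuadraticMap.polar Q v (Pi.single i 1) := by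
        conv_lhs => rw [hx]
        have := map_sum (Q.polarBilin v) (fun i => x i • (Pi.single i (1:ℝ) : Fin n → ℝ)) Finset.univ
        simp only [QuadraticMap.polarBilin_apply_apply] at this
        rw [this]
        refine Finset.sum_congr rfl fun i _ => ?_
        rw [QuadraticMap.polar_smul_right]
        simp [smul_eq_mul]
      rw [hL]
      simp only [map_sum, eval_mul, eval_C, eval_X, hα, hpol, Finset.sum_div]
      refine Finset.sum_congr rfl fun i _ => by ring
    have hLhom : L.IsHomogeneous 1 := by
      rw [hL]
      have : ∀ i : Fin n, (C (α i) * X i : MvPolynomial (Fin n) ℝ).IsHomogeneous 1 := by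
        intro i
        have := (isHomogeneous_C (Fin n) (α i)).mul (isHomogeneous_X ℝ i)
        simpa using this
      exact IsHomogeneous.sum _ _ _ fun i _ => this i
    set G : MvPolynomial (Fin n) ℝ := L ^ 2 with hG
    have hGhom : G.IsHomogeneous 2 := by
      have := hLhom.pow 2
      simpa using this
    have hevalG : ∀ x, eval x G = (QuadraticMap.polar Q v x) ^ 2 / (4 * Q v) := by
      intro x
      rw [hG, map_pow, hevalL]
      rw [div_pow]
      congr 1
      rw [mul_pow]
      rw [hs2]
      norm_num
    have hGpos : ∀ x, 0 ≤ eval x G := by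
      intro x
      rw [hevalG]
      positivity
    have hFGpos : ∀ x, 0 ≤ eval x (F - G) := by
      intro x
      rw [map_sub, hevalG, ← hQ]
      rw [sub_nonneg, div_le_iff₀ (by positivity)]
      have := aux_cs Q hqn v x
      nlinarith [this]
    obtain ⟨c₁, c₂, hc₁, hc₂, hG1, hG2⟩ :=
      hext G (F - G) hGhom (hF.sub hGhom) hGpos hFGpos (by ring)
    have hevalGv : eval v G = Q v := by
      rw [hevalG, QuadraticMap.polar_self]
      have h2 : (2 : ℕ) • Q v = 2 * Q v := by simp [nsmul_eq_mul]
      rw [h2]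
      field_simp
      ring
    have hc1 : c₁ = 1 := by
      have := congrArg (eval v) hG1
      rw [hevalGv, smul_eval, ← hQ] at this
      have h' : (c₁ - 1) * Q v = 0 := by linarith [this]
      rcases mul_eq_zero.mp h' with h | h
      · linarith
      · exact absurd h (ne_of_gt hQv)
    refine ⟨α, ?_⟩
    rw [hc1, one_smul] at hG1
    rw [← hG1, hG, hL]
  · -- square of linear → extreme
    rintro ⟨α, hFa⟩ F₁ F₂ h₁ h₂ hp₁ hp₂ hsum
    have hevalF : ∀ x, eval x F = (∑ i, α i * x i) ^ 2 := by
      intro x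
      rw [hFa, map_pow, map_sum]
      simp
    obtain ⟨i₀, hi₀⟩ : ∃ i, α i ≠ 0 := by
      by_contra hc
      push_neg at hc
      refine hF0 (MvPolynomial.funext fun x => ?_)
      rw [hevalF, map_zero]
      simp [hc]
    set v : Fin n → ℝ := Pi.single i₀ 1 with hv
    have hlv : (∑ i, α i * v i) = α i₀ := by
      rw [Finset.sum_eq_single_of_mem i₀ (Finset.mem_univ i₀)]
      · simp [hv]
      · intro i _ hi
        simp [hv, Pi.single_apply, hi]
    have hlvne : (∑ i, α i * v i) ≠ 0 := by rw [hlv]; exact hi₀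
    have hevalFv : eval v F = (∑ i, α i * v i) ^ 2 := hevalF v
    have hFvpos : 0 < eval v F := by
      rw [hevalFv]
      exact pow_two_pos_of_ne_zero hlvne
    have hker : ∀ x, (∑ i, α i * x i) = 0 → eval x F₁ = 0 ∧ eval x F₂ = 0 := by
      intro x hx
      have hFx : eval x F = 0 := by rw [hevalF, hx]; ring
      have hsx : eval x F₁ + eval x F₂ = 0 := by
        rw [← map_add, ← hsum, hFx]
      constructor <;> [linarith [hp₁ x, hp₂ x]; linarith [hp₁ x, hp₂ x]]
    refine ⟨eval v F₁ / eval v F, eval v F₂ / eval v F,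
      div_nonneg (hp₁ v) hFvpos.le, div_nonneg (hp₂ v) hFvpos.le, ?_, ?_⟩
    · refine MvPolynomial.funext fun x => ?_
      rw [smul_eval]
      rw [aux_key α F₁ h₁ hp₁ v hlvne (fun z hz => (hker z hz).1) x,
        hevalFv, hevalF x]
    · refine MvPolynomial.funext fun x => ?_
      rw [smul_eval]
      rw [aux_key α F₂ h₂ hp₂ v hlvne (fun z hz => (hker z hz).2) x,
        hevalFv, hevalF x]
end

section
/- If every complex root of a nonconstant polynomial A ∈ ℂ[X] has strictly positive imaginary part, then every complex root of its derivative A′ also has strictly positive imaginary part. -/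
open Polynomial

/-- If `z` has negative imaginary part, `z⁻¹` has positive imaginary part. -/
lemma inv_im_pos_of_im_neg {z : ℂ} (hz : z.im < 0) : 0 < z⁻¹.im := by
  have hz0 : z ≠ 0 := by
    intro h; rw [h] at hz; simp at hz
  rw [Complex.inv_im]
  have : 0 < Complex.normSq z := Complex.normSq_pos.2 hz0
  exact div_pos (by linarith) this

/-- If every root of a nonconstant complex polynomial has strictly positive
imaginary part, so does its derivative's roots (Gauss–Lucas). -/
theorem derivative_roots_im_pos (A : Polynomial ℂ) (hA : 0 < A.natDegree)
    (h : ∀ α : ℂ, A.IsRoot α → 0 < α.im) :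
    ∀ β : ℂ, (Polynomial.derivative A).IsRoot β → 0 < β.im := by
  intro β hβ
  by_cases hroot : A.IsRoot β
  · exact h β hroot
  by_contra him
  push_neg at him
  have hA0 : A ≠ 0 := fun h0 => by simp [h0] at hA
  set S : Multiset ℂ := A.roots with hS
  set a : ℂ := A.leadingCoeff with ha
  have ha0 : a ≠ 0 := leadingCoeff_ne_zero.2 hA0
  have hcard : S.card = A.natDegree := by
    rw [hS]
    exact (Polynomial.splits_iff_card_roots.mp (IsAlgClosed.splits A))
  have hfact : C a * (S.map fun r => X - C r).prod = A :=
    C_leadingCoeff_mul_prod_multiset_X_sub_C hcard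
  -- value of A at β
  have hAβ : A.eval β = a * (S.map fun r => β - r).prod := by
    rw [← hfact]
    simp [eval_multiset_prod, Multiset.map_map, Function.comp]
  have hP0 : (S.map fun r => β - r).prod ≠ 0 := by
    intro h0
    apply hroot
    unfold IsRoot
    rw [hAβ, h0, mul_zero]
  -- derivative formula
  classical
  have hderiv : (Polynomial.derivative A).eval β
      = a * (S.map fun r => ((S.erase r).map fun s => β - s).prod).sum := by
    rw [← hfact, derivative_mul, derivative_C, zero_mul, zero_add, eval_mul, eval_C]
    congr 1
    rw [derivative_prod, ← coe_evalRingHom, map_multiset_sum, Multiset.map_map]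
    congr 1
    apply Multiset.map_congr rfl
    intro r _
    simp [eval_multiset_prod, Multiset.map_map, Function.comp]
  have hsum0 : (S.map fun r => ((S.erase r).map fun s => β - s).prod).sum = 0 := by
    have := hβ
    unfold IsRoot at this
    rw [hderiv] at this
    exact (mul_eq_zero.mp this).resolve_left ha0
  -- relate erase-products to inverses
  have hkey : ∀ r ∈ S, ((S.erase r).map fun s => β - s).prod
      = (β - r)⁻¹ * (S.map fun s => β - s).prod := by
    intro r hr
    have : (S.map fun s => β - s).prod
        = (β - r) * ((S.erase r).map fun s => β - s).prod := by
      conv_lhs => rw [← Multiset.cons_erase hr]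
      simp
    rw [this]
    have hbr : β - r ≠ 0 := by
      intro h0
      have : β = r := sub_eq_zero.mp h0
      exact hroot (this ▸ isRoot_of_mem_roots hr)
    exact (inv_mul_cancel_left₀ hbr _).symm
  -- the sum of inverses is zero
  have hsum_inv : (S.map fun r => (β - r)⁻¹).sum = 0 := by
    have : (S.map fun r => ((S.erase r).map fun s => β - s).prod).sum
        = (S.map fun r => (β - r)⁻¹).sum * (S.map fun s => β - s).prod := by
      rw [← Multiset.sum_map_mul_right]
      congr 1
      exact Multiset.map_congr rfl hkey
    rw [this] at hsum0
    exact (mul_eq_zero.mp hsum0).resolve_right hP0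
  -- imaginary parts
  have him' : ∀ r ∈ S, 0 < ((β - r)⁻¹).im := by
    intro r hr
    apply inv_im_pos_of_im_neg
    have hr' : 0 < r.im := h r (isRoot_of_mem_roots hr)
    simp only [Complex.sub_im]
    linarith
  have hSne : S ≠ 0 := by
    intro h0
    rw [h0] at hcard
    simp at hcard
    omega
  obtain ⟨r0, hr0⟩ := Multiset.exists_mem_of_ne_zero hSne
  have hsum_im : ((S.map fun r => (β - r)⁻¹).sum).im
      = (S.map fun r => ((β - r)⁻¹).im).sum := by
    rw [← Complex.coe_imAddGroupHom, map_multiset_sum, Multiset.map_map]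
    rfl
  have hpos : 0 < (S.map fun r => ((β - r)⁻¹).im).sum := by
    calc 0 < ((β - r0)⁻¹).im := him' r0 hr0
    _ ≤ (S.map fun r => ((β - r)⁻¹).im).sum := by
        apply Multiset.single_le_sum
        · intro x hx
          obtain ⟨r, hr, rfl⟩ := Multiset.mem_map.mp hx
          exact le_of_lt (him' r hr)
        · exact Multiset.mem_map_of_mem _ hr0
  rw [hsum_inv, Complex.zero_im] at hsum_im
  rw [← hsum_im] at hpos
  exact lt_irrefl 0 hpos
end

section
/- (Hermite–Biehler type lemma) Let d ≥ 2 and let A = ∏_{i=1}^{d} (X − α⁽ⁱ⁾) ∈ ℂ[X] be a monic polynomial whose roots satisfy Im(α⁽ⁱ⁾)·Im(α⁽ʲ⁾) > 0 for all i, j (all imaginary parts are nonzero and of the same sign). Write A = G + i·H where G, H ∈ ℝ[X] are the real polynomials formed by the real parts and the imaginary parts of the coefficients of A respectively. Then G and H each have only real roots, i.e., both G and H split over ℝ. -/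
open Polynomial

/-- A real polynomial all of whose complex roots are real splits over `ℝ`. -/
lemma splits_of_complex_roots_real (p : Polynomial ℝ)
    (h : ∀ z : ℂ, (p.map (algebraMap ℝ ℂ)).IsRoot z → z.im = 0) :
    (p.map (RingHom.id ℝ)).Splits := by
  rw [Polynomial.map_id]
  by_cases hp : p = 0
  · simp [hp]
  set q := p.map (algebraMap ℝ ℂ) with hq
  have hq0 : q ≠ 0 := by
    simpa [hq, Polynomial.map_eq_zero] using hp
  have hsp : q.Splits := IsAlgClosed.splits q
  have hqeq := hsp.eq_prod_roots
  rw [splits_iff_exists_multiset]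
  refine ⟨q.roots.map Complex.re, ?_⟩
  apply Polynomial.map_injective (algebraMap ℝ ℂ) (algebraMap ℝ ℂ).injective
  rw [Polynomial.map_mul, Polynomial.map_multiset_prod]
  have hlead : q.leadingCoeff = algebraMap ℝ ℂ p.leadingCoeff := by
    rw [hq, leadingCoeff_map_of_leadingCoeff_ne_zero]
    simpa using leadingCoeff_ne_zero.mpr hp
  calc p.map (algebraMap ℝ ℂ)
      = C q.leadingCoeff * (q.roots.map fun a => X - C a).prod := hqeq
    _ = _ := by
        rw [hlead]
        congr 1
        · simp [map_C]
        · rw [Multiset.map_map, Multiset.map_map]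
          congr 1
          apply Multiset.map_congr rfl
          intro z hz
          have hz' : z.im = 0 := h z ((mem_roots hq0).mp hz)
          have : (algebraMap ℝ ℂ) z.re = z := by
            apply Complex.ext <;> simp [hz']
          simp [this]

lemma abs_sub_lt_abs_sub_conj (z w : ℂ) (h : 0 < z.im * w.im) :
    ‖z - w‖ < ‖z - starRingEnd ℂ w‖ := by
  apply lt_of_pow_lt_pow_left₀ 2 (norm_nonneg _)
  rw [Complex.sq_norm, Complex.sq_norm, Complex.normSq_apply, Complex.normSq_apply]
  simp only [Complex.sub_re, Complex.sub_im, Complex.conj_re, Complex.conj_im]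
  nlinarith [h]

lemma key_ne (d : ℕ) (hd : 2 ≤ d) (α : Fin d → ℂ)
    (hα : ∀ i j : Fin d, 0 < (α i).im * (α j).im)
    (r : ℂ) (him : r.im ≠ 0) :
    ∏ i, ‖r - α i‖ ≠ ∏ i, ‖r - starRingEnd ℂ (α i)‖ := by
  have hne : (Finset.univ : Finset (Fin d)).Nonempty := by
    refine ⟨⟨0, by omega⟩, Finset.mem_univ _⟩
  obtain ⟨i0, _⟩ := hne
  rcases lt_or_gt_of_ne (mul_ne_zero him (fun h0 => by simpa [h0] using hα i0 i0) :
      r.im * (α i0).im ≠ 0) with hcase | hcase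
  · -- r.im * (α i0).im < 0 : each |r - conj αᵢ| < |r - αᵢ|
    have hstep : ∀ i, ‖r - starRingEnd ℂ (α i)‖ < ‖r - α i‖ := by
      intro i
      have h2 : 0 < r.im * (starRingEnd ℂ (α i)).im := by
        simp only [Complex.conj_im]
        nlinarith [hα i0 i, hα i0 i0, sq_nonneg r.im, sq_nonneg ((α i0).im)]
      have := abs_sub_lt_abs_sub_conj r (starRingEnd ℂ (α i)) h2
      simpa using this
    intro heq
    by_cases hz : ∀ i : Fin d, 0 < ‖r - starRingEnd ℂ (α i)‖
    · have := Finset.prod_lt_prod_of_nonempty (fun i _ => hz i) (fun i _ => hstep i)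
        ⟨i0, Finset.mem_univ _⟩
      exact absurd heq (ne_of_gt this)
    · push_neg at hz
      obtain ⟨i, hi⟩ := hz
      have hi0 : ‖r - starRingEnd ℂ (α i)‖ = 0 :=
        le_antisymm hi (norm_nonneg _)
      have hrhs : ∏ j, ‖r - starRingEnd ℂ (α j)‖ = 0 :=
        Finset.prod_eq_zero (Finset.mem_univ i) hi0
      have hlhs : 0 < ∏ j, ‖r - α j‖ := by
        apply Finset.prod_pos
        intro j _
        exact lt_of_le_of_lt (norm_nonneg _) (by
          calc ‖r - starRingEnd ℂ (α j)‖ < _ := hstep j)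
      rw [heq, hrhs] at hlhs
      exact lt_irrefl 0 hlhs
  · -- r.im * (α i0).im > 0 : each |r - αᵢ| < |r - conj αᵢ|
    have hstep : ∀ i, ‖r - α i‖ < ‖r - starRingEnd ℂ (α i)‖ := by
      intro i
      apply abs_sub_lt_abs_sub_conj
      nlinarith [hα i0 i, hα i0 i0, sq_nonneg r.im, sq_nonneg ((α i0).im)]
    intro heq
    by_cases hz : ∀ i : Fin d, 0 < ‖r - α i‖
    · have := Finset.prod_lt_prod_of_nonempty (fun i _ => hz i) (fun i _ => hstep i)
        ⟨i0, Finset.mem_univ _⟩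
      exact absurd heq (ne_of_lt this)
    · push_neg at hz
      obtain ⟨i, hi⟩ := hz
      have hi0 : ‖r - α i‖ = 0 := le_antisymm hi (norm_nonneg _)
      have hlhs : ∏ j, ‖r - α j‖ = 0 :=
        Finset.prod_eq_zero (Finset.mem_univ i) hi0
      have hrhs : 0 < ∏ j, ‖r - starRingEnd ℂ (α j)‖ := by
        apply Finset.prod_pos
        intro j _
        exact lt_of_le_of_lt (norm_nonneg _) (hstep j)
      rw [heq] at hlhs
      rw [hlhs] at hrhs
      exact lt_irrefl 0 hrhs

/-- Hermite–Biehler type lemma: if all the roots of a monic complex polynomial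
`A` of degree `d ≥ 2` have imaginary parts of the same (nonzero) sign, and
`A = G + i H` with `G, H` real, then `G` and `H` split over `ℝ`. -/
theorem hermite_biehler (d : ℕ) (hd : 2 ≤ d) (α : Fin d → ℂ)
    (hα : ∀ i j : Fin d, 0 < (α i).im * (α j).im)
    (A : Polynomial ℂ) (hA : A = ∏ i, (X - C (α i)))
    (G H : Polynomial ℝ)
    (hGH : A = G.map (algebraMap ℝ ℂ) + C Complex.I * H.map (algebraMap ℝ ℂ)) :
    (G.map (RingHom.id ℝ)).Splits ∧ (H.map (RingHom.id ℝ)).Splits := by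
  set Gm := G.map (algebraMap ℝ ℂ) with hGm
  set Hm := H.map (algebraMap ℝ ℂ) with hHm
  have hcomp : (starRingEnd ℂ).comp (algebraMap ℝ ℂ) = algebraMap ℝ ℂ := by
    ext x
    simp [Complex.conj_ofReal]
  have hP : (∏ i, (X - C (α i))) = Gm + C Complex.I * Hm := hA ▸ hGH
  have hQ : (∏ i, (X - C (starRingEnd ℂ (α i)))) = Gm - C Complex.I * Hm := by
    have h1 := congrArg (Polynomial.map (starRingEnd ℂ)) hP
    rw [Polynomial.map_prod] at h1
    simp only [Polynomial.map_sub, Polynomial.map_add, Polynomial.map_mul, map_X, map_C,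
      Complex.conj_I] at h1
    rw [h1, hGm, hHm, Polynomial.map_map, Polynomial.map_map, hcomp, map_neg]
    ring
  have e1 : ∀ z : ℂ, (∏ i, (z - α i)) = eval z Gm + Complex.I * eval z Hm := by
    intro z
    have := congrArg (eval z) hP
    simpa [eval_prod] using this
  have e2 : ∀ z : ℂ, (∏ i, (z - starRingEnd ℂ (α i))) = eval z Gm - Complex.I * eval z Hm := by
    intro z
    have := congrArg (eval z) hQ
    simpa [eval_prod] using this
  constructor
  · apply splits_of_complex_roots_real
    intro z hz
    by_contra him
    apply key_ne d hd α hα z him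
    have hz0 : eval z Gm = 0 := hz
    rw [← norm_prod, ← norm_prod, e1, e2, hz0]
    simp
  · apply splits_of_complex_roots_real
    intro z hz
    by_contra him
    apply key_ne d hd α hα z him
    have hz0 : eval z Hm = 0 := hz
    rw [← norm_prod, ← norm_prod, e1, e2, hz0]
    simp
end

section
/- The Carathéodory number of the cone of nonnegative binary forms is 2: for every d ≥ 1 and every homogeneous F ∈ ℝ[x,y] of degree 2d with F(a,b) ≥ 0 for all (a,b) ∈ ℝ², there exist G, H ∈ ℝ[x,y], each either zero or homogeneous of degree d and a product of real linear forms, such that F = G² + H². In other words, every nonnegative binary form is a sum of at most two extreme points of P_{2,2d}. -/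
section OneVarHelpers
open Polynomial

/-- If a nonneg polynomial has a root, the root has multiplicity ≥ 2 and the
quotient by `(X - r)^2` is still nonneg. -/
lemma root2 (f : Polynomial ℝ) (hpos : ∀ t, 0 ≤ f.eval t) (r : ℝ) (hr : f.eval r = 0) :
    ∃ f₂ : Polynomial ℝ, f = (X - C r) ^ 2 * f₂ ∧ ∀ t, 0 ≤ f₂.eval t := by
  obtain ⟨f₁, hf₁⟩ : (X - C r) ∣ f := dvd_iff_isRoot.mpr hr
  have hf₁r : f₁.eval r = 0 := by
    by_contra hne
    rcases lt_or_gt_of_ne hne with hlt | hgt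
    · -- f₁ r < 0 : pick t > r with f₁ t < 0, then f t = (t - r) * f₁ t < 0
      have hev : ∀ᶠ t in nhdsWithin r (Set.Ioi r), f₁.eval t < 0 :=
        nhdsWithin_le_nhds (f₁.continuousAt.eventually_lt continuousAt_const hlt)
      obtain ⟨t, ht, htr⟩ := (hev.and self_mem_nhdsWithin).exists
      have : f.eval t < 0 := by
        rw [hf₁]
        simp only [eval_mul, eval_sub, eval_X, eval_C]
        have : (0:ℝ) < t - r := by simpa using (Set.mem_Ioi.mp htr)
        nlinarith
      exact absurd (hpos t) (not_le.mpr this)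
    · have hev : ∀ᶠ t in nhdsWithin r (Set.Iio r), 0 < f₁.eval t :=
        nhdsWithin_le_nhds (continuousAt_const.eventually_lt f₁.continuousAt hgt)
      obtain ⟨t, ht, htr⟩ := (hev.and self_mem_nhdsWithin).exists
      have : f.eval t < 0 := by
        rw [hf₁]
        simp only [eval_mul, eval_sub, eval_X, eval_C]
        have : t - r < 0 := by simpa using (Set.mem_Iio.mp htr)
        nlinarith
      exact absurd (hpos t) (not_le.mpr this)
  obtain ⟨f₂, hf₂⟩ : (X - C r) ∣ f₁ := dvd_iff_isRoot.mpr hf₁r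
  refine ⟨f₂, by rw [hf₁, hf₂]; ring, ?_⟩
  intro t
  rcases eq_or_ne t r with rfl | htr
  · -- limit argument
    have hev : ∀ᶠ s in nhdsWithin t {t}ᶜ, 0 ≤ f₂.eval s := by
      filter_upwards [self_mem_nhdsWithin] with s hs
      have hs' : s - t ≠ 0 := sub_ne_zero.mpr hs
      have := hpos s
      rw [hf₁, hf₂] at this
      simp only [eval_mul, eval_sub, eval_X, eval_C] at this
      nlinarith [sq_pos_of_ne_zero hs', sq_nonneg (s - t), mul_self_nonneg (s-t)]
    have : Filter.Tendsto (fun s => f₂.eval s) (nhdsWithin t {t}ᶜ) (nhds (f₂.eval t)) :=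
      f₂.continuousAt.continuousWithinAt.tendsto
    exact ge_of_tendsto this hev
  · have hs' : t - r ≠ 0 := sub_ne_zero.mpr htr
    have := hpos t
    rw [hf₁, hf₂] at this
    simp only [eval_mul, eval_sub, eval_X, eval_C] at this
    nlinarith [sq_pos_of_ne_zero hs']

/-- Split off squared real-root factors: `f = s^2 * f₊` with `s` split and
`f₊` nonneg without real roots. -/
lemma nonneg_factor (f : Polynomial ℝ) (hpos : ∀ t, 0 ≤ f.eval t) (hf : f ≠ 0) :
    ∃ s g : Polynomial ℝ, f = s ^ 2 * g ∧ s.Splits ∧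
      (∀ t, 0 ≤ g.eval t) ∧ (∀ t, g.eval t ≠ 0) := by
  obtain ⟨n, hn⟩ : ∃ n, f.natDegree ≤ n := ⟨f.natDegree, le_rfl⟩
  induction n using Nat.strong_induction_on generalizing f with
  | _ n IH =>
    by_cases hroot : ∃ r, f.eval r = 0
    · obtain ⟨r, hr⟩ := hroot
      obtain ⟨f₂, hf₂, hpos₂⟩ := root2 f hpos r hr
      have hf₂0 : f₂ ≠ 0 := fun h => hf (by rw [hf₂, h, mul_zero])
      have hXr : ((X - C r : Polynomial ℝ)) ^ 2 ≠ 0 := pow_ne_zero _ (X_sub_C_ne_zero r)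
      have hdeg : f.natDegree = 2 + f₂.natDegree := by
        rw [hf₂, Polynomial.natDegree_mul hXr hf₂0, Polynomial.natDegree_pow,
          Polynomial.natDegree_X_sub_C]
      have hlt : f₂.natDegree < n := by omega
      obtain ⟨s, g, h1, h2, h3, h4⟩ := IH f₂.natDegree hlt f₂ hpos₂ hf₂0 le_rfl
      exact ⟨(X - C r) * s, g, by rw [hf₂, h1]; ring,
        (Splits.mul (Splits.X_sub_C _) h2), h3, h4⟩
    · push_neg at hroot
      exact ⟨1, f, by ring, Splits.one, hpos, hroot⟩

open Complex in
/-- A nonneg real polynomial without real roots factors into positive-definite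
monic quadratics times a positive constant. -/
lemma posfactor (f : Polynomial ℝ) (hpos : ∀ t, 0 ≤ f.eval t) (hroot : ∀ t, f.eval t ≠ 0) :
    ∃ (c : ℝ) (L : List (ℝ × ℝ)), 0 < c ∧ (∀ p ∈ L, 0 < p.2) ∧
      f = C c * (L.map fun p => (X - C p.1) ^ 2 + C (p.2 ^ 2)).prod := by
  obtain ⟨n, hn⟩ : ∃ n, f.natDegree ≤ n := ⟨f.natDegree, le_rfl⟩
  induction n using Nat.strong_induction_on generalizing f with
  | _ n IH =>
    by_cases hdeg : f.natDegree = 0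
    · refine ⟨f.coeff 0, [], ?_, by simp, by
        conv_lhs => rw [Polynomial.eq_C_of_natDegree_eq_zero hdeg]
        simp⟩
      have h0 := hpos 0
      have h1 := hroot 0
      rw [Polynomial.eq_C_of_natDegree_eq_zero hdeg] at h0 h1
      simp only [eval_C] at h0 h1
      exact lt_of_le_of_ne h0 (Ne.symm h1)
    · -- get a complex root
      have hf0 : f ≠ 0 := fun h => hroot 0 (by simp [h])
      have hmapdeg : 0 < (f.map (algebraMap ℝ ℂ)).degree := by
        rw [Polynomial.degree_map]
        exact Polynomial.natDegree_pos_iff_degree_pos.mp (Nat.pos_of_ne_zero hdeg)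
      obtain ⟨z, hz⟩ := Complex.exists_root hmapdeg
      have hzf : Polynomial.aeval z f = 0 := by
        rwa [Polynomial.aeval_def, ← Polynomial.eval_map]
      have him : z.im ≠ 0 := by
        intro h0
        have : (z.re : ℂ) = z := by
          apply Complex.ext <;> simp [h0]
        have h2 : Polynomial.aeval ((algebraMap ℝ ℂ) z.re) f = 0 := by
          rw [Complex.coe_algebraMap, this]; exact hzf
        rw [Polynomial.aeval_algebraMap_apply_eq_algebraMap_eval] at h2
        rw [Complex.coe_algebraMap] at h2
        exact hroot z.re (by exact_mod_cast h2)
      set a := z.re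
      set b := z.im
      set Q : Polynomial ℝ := (X - C a) ^ 2 + C (b ^ 2) with hQ
      have hQmonic : Q.Monic := by
        have h1 : ((X - C a) ^ 2 : Polynomial ℝ).Monic := (monic_X_sub_C a).pow 2
        apply h1.add_of_left
        rw [Polynomial.degree_pow, Polynomial.degree_X_sub_C]
        exact lt_of_le_of_lt (Polynomial.degree_C_le) (by norm_num)
      have hQdeg : Q.natDegree = 2 := by
        rw [hQ, Polynomial.natDegree_add_C, Polynomial.natDegree_pow,
          Polynomial.natDegree_X_sub_C]
      -- Q z = 0 and Q (conj z) = 0 over ℂ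
      have hQz : Polynomial.aeval z Q = 0 := by
        simp only [hQ, map_add, map_pow, map_sub, Polynomial.aeval_X, Polynomial.aeval_C,
          Complex.coe_algebraMap]
        have : (z - (a : ℂ)) = b * I := by
          apply Complex.ext <;> simp [a, b]
        rw [this]
        rw [mul_pow, I_sq]
        ring
      have hQzc : Polynomial.aeval (starRingEnd ℂ z) Q = 0 := by
        rw [Polynomial.aeval_conj, hQz, map_zero]
      have hfzc : Polynomial.aeval (starRingEnd ℂ z) f = 0 := by
        rw [Polynomial.aeval_conj, hzf, map_zero]
      -- remainder is zero
      have hmod : f %ₘ Q = 0 := by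
        set r := f %ₘ Q with hr
        have hrdeg : r.natDegree ≤ 1 := by
          have h5 := Polynomial.natDegree_modByMonic_lt f hQmonic (fun h => by
            rw [h] at hQdeg; simp at hQdeg)
          rw [← hr] at h5
          omega
        have hrform := Polynomial.eq_X_add_C_of_natDegree_le_one hrdeg
        have key : ∀ w : ℂ, Polynomial.aeval w Q = 0 → Polynomial.aeval w f = 0 →
            (r.coeff 1 : ℂ) * w + (r.coeff 0 : ℂ) = 0 := by
          intro w hQw hfw
          have := Polynomial.modByMonic_add_div f Q
          have h2 : Polynomial.aeval w (f %ₘ Q + Q * (f /ₘ Q)) = Polynomial.aeval w f := by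
            rw [this]
          rw [map_add, map_mul, hQw, zero_mul, add_zero, hfw] at h2
          rw [← hr] at h2
          conv_lhs at h2 => rw [hrform]
          simpa using h2
        have k1 := key z hQz hzf
        have k2 := key (starRingEnd ℂ z) hQzc hfzc
        have hzne : z ≠ starRingEnd ℂ z := by
          intro h
          apply him
          have := congrArg Complex.im h
          simp at this
          linarith
        have hc1 : (r.coeff 1 : ℂ) = 0 := by
          by_contra hne
          apply hzne
          have := sub_eq_zero.mpr (k1.trans k2.symm)
          rw [show (r.coeff 1 : ℂ) * z + (r.coeff 0:ℂ) - ((r.coeff 1:ℂ) * (starRingEnd ℂ z) + (r.coeff 0:ℂ)) = (r.coeff 1:ℂ) * (z - starRingEnd ℂ z) by ring] at this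
          rcases mul_eq_zero.mp this with h | h
          · exact absurd h hne
          · exact sub_eq_zero.mp h
        have hc0 : (r.coeff 0 : ℂ) = 0 := by
          rw [hc1, zero_mul, zero_add] at k1; exact k1
        rw [hrform]
        have : r.coeff 1 = 0 := by exact_mod_cast hc1
        have h0 : r.coeff 0 = 0 := by exact_mod_cast hc0
        rw [this, h0]
        simp
      obtain ⟨f₁, hf₁⟩ : Q ∣ f := (Polynomial.modByMonic_eq_zero_iff_dvd hQmonic).mp hmod
      have hQpos : ∀ t : ℝ, 0 < Q.eval t := by
        intro t
        simp only [hQ, eval_add, eval_pow, eval_sub, eval_X, eval_C]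
        have : b ^ 2 > 0 := by positivity
        nlinarith [sq_nonneg (t - a)]
      have hf₁pos : ∀ t, 0 ≤ f₁.eval t := by
        intro t
        have := hpos t
        rw [hf₁, eval_mul] at this
        nlinarith [hQpos t]
      have hf₁root : ∀ t, f₁.eval t ≠ 0 := by
        intro t h
        exact hroot t (by rw [hf₁, eval_mul, h, mul_zero])
      have hf₁0 : f₁ ≠ 0 := fun h => hf0 (by rw [hf₁, h, mul_zero])
      have hQ0 : Q ≠ 0 := hQmonic.ne_zero
      have hdeg2 : f.natDegree = 2 + f₁.natDegree := by
        rw [hf₁, Polynomial.natDegree_mul hQ0 hf₁0, hQdeg]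
      have hlt : f₁.natDegree < n := by omega
      obtain ⟨c, L, hc, hL, hprod⟩ := IH f₁.natDegree hlt f₁ hf₁pos hf₁root le_rfl
      refine ⟨c, (a, |b|) :: L, hc, ?_, ?_⟩
      · intro p hp
        rcases List.mem_cons.mp hp with rfl | hp
        · exact abs_pos.mpr him
        · exact hL p hp
      · rw [List.map_cons, List.prod_cons, hf₁, hprod]
        have : |b| ^ 2 = b ^ 2 := sq_abs b
        simp only [this]
        ring

/-- One step of the Gauss-type construction. -/
noncomputable def ghStep (p : ℝ × ℝ) (gh : Polynomial ℝ × Polynomial ℝ) : Polynomial ℝ × Polynomial ℝ :=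
  (gh.1 * (X - C p.1) + C p.2 * gh.2, gh.2 * (X - C p.1) - C p.2 * gh.1)

noncomputable def ghList (e : ℝ) (L : List (ℝ × ℝ)) : Polynomial ℝ × Polynomial ℝ :=
  L.foldr ghStep (C e, 0)

lemma gh_sq (e : ℝ) (L : List (ℝ × ℝ)) :
    (ghList e L).1 ^ 2 + (ghList e L).2 ^ 2 =
      C (e ^ 2) * (L.map fun p => (X - C p.1) ^ 2 + C (p.2 ^ 2)).prod := by
  induction L with
  | nil => simp [ghList, map_pow]
  | cons p L ih =>
    have hfold : ghList e (p :: L) = ghStep p (ghList e L) := rfl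
    rw [hfold, List.map_cons, List.prod_cons]
    simp only [ghStep]
    rw [show (C (p.2 ^ 2) : Polynomial ℝ) = (C p.2) ^ 2 by rw [map_pow]]
    linear_combination ((X - C p.1) ^ 2 + (C p.2) ^ 2) * ih

open Complex in
lemma gh_eval (e : ℝ) (L : List (ℝ × ℝ)) (w : ℂ) :
    (Polynomial.aeval w (ghList e L).1 + I * Polynomial.aeval w (ghList e L).2 =
      (e : ℂ) * (L.map fun p => w - (p.1 + p.2 * I)).prod) ∧
    (Polynomial.aeval w (ghList e L).1 - I * Polynomial.aeval w (ghList e L).2 =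
      (e : ℂ) * (L.map fun p => w - (p.1 - p.2 * I)).prod) := by
  induction L with
  | nil =>
    simp [ghList, Polynomial.aeval_C, Complex.coe_algebraMap]
  | cons p L ih =>
    have hfold : ghList e (p :: L) = ghStep p (ghList e L) := rfl
    rw [hfold, List.map_cons, List.prod_cons, List.map_cons, List.prod_cons]
    obtain ⟨ih1, ih2⟩ := ih
    simp only [ghStep, map_add, map_sub, map_mul, Polynomial.aeval_X, Polynomial.aeval_C,
      Complex.coe_algebraMap]
    constructor
    · linear_combination (w - ((p.1 : ℂ) + p.2 * I)) * ih1 +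
        ((p.2 : ℂ) * Polynomial.aeval w (ghList e L).2) * Complex.I_sq
    · linear_combination (w - ((p.1 : ℂ) - p.2 * I)) * ih2 +
        ((p.2 : ℂ) * Polynomial.aeval w (ghList e L).2) * Complex.I_sq

open Complex in
lemma key_ineq (w : ℂ) (hw : w.im < 0) (a b : ℝ) (hb : 0 < b) :
    ‖w - (a - b * I)‖ < ‖w - (a + b * I)‖ := by
  rw [Complex.norm_def, Complex.norm_def]
  apply Real.sqrt_lt_sqrt (Complex.normSq_nonneg _)
  simp only [Complex.normSq_apply, Complex.sub_re, Complex.sub_im, Complex.add_re,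
    Complex.add_im, Complex.mul_re, Complex.mul_im, Complex.I_re, Complex.I_im,
    Complex.ofReal_re, Complex.ofReal_im]
  nlinarith [mul_pos (neg_pos.mpr hw) hb]

open Complex in
lemma prod_lt (w : ℂ) (hw : w.im < 0) (L : List (ℝ × ℝ)) (hne : L ≠ [])
    (hb : ∀ p ∈ L, 0 < p.2) :
    (L.map fun p => ‖w - (p.1 - p.2 * I)‖).prod <
    (L.map fun p => ‖w - (p.1 + p.2 * I)‖).prod := by
  induction L with
  | nil => exact absurd rfl hne
  | cons p L ih =>
    rw [List.map_cons, List.prod_cons, List.map_cons, List.prod_cons]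
    have h0 : 0 < p.2 := hb p (List.mem_cons_self (a := p) (l := L))
    have hkey := key_ineq w hw p.1 p.2 h0
    rcases List.eq_nil_or_concat' L with rfl | _
    · simpa using hkey
    case inr hL =>
      have hne' : L ≠ [] := by rintro rfl; obtain ⟨_, _, h⟩ := hL; simp at h
      have ihh := ih hne' (fun q hq => hb q (List.mem_cons_of_mem p hq))
      have hA : (0:ℝ) ≤ (L.map fun p => ‖w - (p.1 - p.2 * I)‖).prod := by
        apply List.prod_nonneg
        intro x hx
        obtain ⟨q, _, rfl⟩ := List.mem_map.mp hx
        exact norm_nonneg _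
      have habs : (0:ℝ) ≤ ‖w - (p.1 - p.2 * I)‖ := norm_nonneg _
      nlinarith

/-- A real polynomial all of whose complex roots are real splits over ℝ. -/
lemma splits_of_real_roots (g : Polynomial ℝ)
    (hroots : ∀ z : ℂ, Polynomial.aeval z g = 0 → z.im = 0) :
    g.Splits := by
  obtain ⟨n, hn⟩ : ∃ n, g.natDegree ≤ n := ⟨g.natDegree, le_rfl⟩
  induction n using Nat.strong_induction_on generalizing g with
  | _ n IH =>
    by_cases hdeg : g.natDegree ≤ 1
    · exact Splits.of_natDegree_le_one hdeg
    · have hg0 : g ≠ 0 := by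
        intro h
        have := hroots Complex.I (by rw [h]; simp)
        simp at this
      have hmapdeg : 0 < (g.map (algebraMap ℝ ℂ)).degree := by
        rw [Polynomial.degree_map]
        exact Polynomial.natDegree_pos_iff_degree_pos.mp (by omega)
      obtain ⟨z, hz⟩ := Complex.exists_root hmapdeg
      have hzg : Polynomial.aeval z g = 0 := by
        rwa [Polynomial.aeval_def, ← Polynomial.eval_map]
      have him := hroots z hzg
      have hzre : ((z.re : ℝ) : ℂ) = z := by apply Complex.ext <;> simp [him]
      have hre : g.eval z.re = 0 := by
        have h2 : Polynomial.aeval ((algebraMap ℝ ℂ) z.re) g = 0 := by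
          rw [Complex.coe_algebraMap, hzre]; exact hzg
        rw [Polynomial.aeval_algebraMap_apply_eq_algebraMap_eval, Complex.coe_algebraMap] at h2
        exact_mod_cast h2
      obtain ⟨g₁, hg₁⟩ : (X - C z.re) ∣ g := dvd_iff_isRoot.mpr hre
      have hg₁0 : g₁ ≠ 0 := fun h => hg0 (by rw [hg₁, h, mul_zero])
      have hdeg1 : g.natDegree = 1 + g₁.natDegree := by
        rw [hg₁, Polynomial.natDegree_mul (X_sub_C_ne_zero z.re) hg₁0,
          Polynomial.natDegree_X_sub_C]
      have hroots₁ : ∀ w : ℂ, Polynomial.aeval w g₁ = 0 → w.im = 0 := by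
        intro w hw
        apply hroots w
        rw [hg₁, map_mul, hw, mul_zero]
      have := IH g₁.natDegree (by omega) g₁ hroots₁ le_rfl
      rw [hg₁]
      exact Splits.mul (Splits.X_sub_C _) this

open Complex in
lemma gh_no_lower_root (e : ℝ) (he : e ≠ 0) (L : List (ℝ × ℝ)) (hne : L ≠ [])
    (hb : ∀ p ∈ L, 0 < p.2) (w : ℂ) (hw : w.im < 0) :
    Polynomial.aeval w (ghList e L).1 ≠ 0 ∧ Polynomial.aeval w (ghList e L).2 ≠ 0 := by
  have habs : ‖Polynomial.aeval w (ghList e L).1 + I * Polynomial.aeval w (ghList e L).2‖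
      ≠ ‖Polynomial.aeval w (ghList e L).1 - I * Polynomial.aeval w (ghList e L).2‖ := by
    rw [(gh_eval e L w).1, (gh_eval e L w).2]
    rw [norm_mul, norm_mul]
    have he' : ‖(e : ℂ)‖ ≠ 0 := by
      simp [he]
    intro hcontra
    have h2 : ‖(L.map fun p => w - (↑p.1 + ↑p.2 * I)).prod‖ =
        ‖(L.map fun p => w - (↑p.1 - ↑p.2 * I)).prod‖ :=
      mul_left_cancel₀ he' hcontra
    rw [List.norm_prod, List.norm_prod, List.map_map, List.map_map] at h2
    have := prod_lt w hw L hne hb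
    simp only [Function.comp_def] at h2
    rw [h2] at this
    exact lt_irrefl _ this
  constructor
  · intro h
    apply habs
    rw [h, zero_add, zero_sub, norm_neg]
  · intro h
    apply habs
    rw [h, mul_zero, add_zero, sub_zero]

open Complex in
lemma gh_roots_real (e : ℝ) (he : e ≠ 0) (L : List (ℝ × ℝ)) (hne : L ≠ [])
    (hb : ∀ p ∈ L, 0 < p.2) :
    (∀ z : ℂ, Polynomial.aeval z (ghList e L).1 = 0 → z.im = 0) ∧
    (∀ z : ℂ, Polynomial.aeval z (ghList e L).2 = 0 → z.im = 0) := by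
  constructor
  · intro z hz
    by_contra him
    rcases lt_or_gt_of_ne him with hlt | hgt
    · exact (gh_no_lower_root e he L hne hb z hlt).1 hz
    · have : Polynomial.aeval (starRingEnd ℂ z) (ghList e L).1 = 0 := by
        rw [Polynomial.aeval_conj, hz, map_zero]
      have him2 : (starRingEnd ℂ z).im < 0 := by
        simp only [Complex.conj_im]
        linarith
      exact (gh_no_lower_root e he L hne hb _ him2).1 this
  · intro z hz
    by_contra him
    rcases lt_or_gt_of_ne him with hlt | hgt
    · exact (gh_no_lower_root e he L hne hb z hlt).2 hz
    · have : Polynomial.aeval (starRingEnd ℂ z) (ghList e L).2 = 0 := by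
        rw [Polynomial.aeval_conj, hz, map_zero]
      have him2 : (starRingEnd ℂ z).im < 0 := by
        simp only [Complex.conj_im]
        linarith
      exact (gh_no_lower_root e he L hne hb _ him2).2 this

/-- Core 1-variable theorem: a nonnegative real polynomial is a sum of two
squares of real-split polynomials. -/
theorem nonneg_sum_two_squares (f : Polynomial ℝ) (hpos : ∀ t, 0 ≤ f.eval t) :
    ∃ g h : Polynomial ℝ, f = g ^ 2 + h ^ 2 ∧
      g.Splits ∧ h.Splits := by
  by_cases hf : f = 0
  · exact ⟨0, 0, by rw [hf]; ring, Splits.zero, Splits.zero⟩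
  obtain ⟨s, g0, hfs, hs, hg0pos, hg0root⟩ := nonneg_factor f hpos hf
  obtain ⟨c, L, hc, hL, hprod⟩ := posfactor g0 hg0pos hg0root
  set e := Real.sqrt c with he
  have he0 : e ≠ 0 := ne_of_gt (Real.sqrt_pos.mpr hc)
  have hee : e ^ 2 = c := Real.sq_sqrt hc.le
  have hsq := gh_sq e L
  rw [hee, ← hprod] at hsq
  refine ⟨s * (ghList e L).1, s * (ghList e L).2, ?_, ?_, ?_⟩
  · rw [hfs, ← hsq]; ring
  · apply Splits.mul hs
    rcases List.eq_nil_or_concat' L with rfl | hL'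
    · simp only [ghList, List.foldr_nil]
      exact Splits.C _
    · have hne : L ≠ [] := by rintro rfl; obtain ⟨_, _, h⟩ := hL'; simp at h
      exact splits_of_real_roots _ ((gh_roots_real e he0 L hne hL).1)
  · apply Splits.mul hs
    rcases List.eq_nil_or_concat' L with rfl | hL'
    · simp only [ghList, List.foldr_nil]
      exact Splits.zero
    · have hne : L ≠ [] := by rintro rfl; obtain ⟨_, _, h⟩ := hL'; simp at h
      exact splits_of_real_roots _ ((gh_roots_real e he0 L hne hL).2)

open MvPolynomial in
/-- Evaluating a polynomial-valued multivariate evaluation. -/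
lemma eval_aeval_eq (P : MvPolynomial (Fin 2) ℝ) (q : Fin 2 → Polynomial ℝ) (t : ℝ) :
    Polynomial.eval t (MvPolynomial.aeval q P) = eval (fun i => Polynomial.eval t (q i)) P := by
  have h1 : MvPolynomial.aeval q P = eval₂ Polynomial.C q P := by
    rw [MvPolynomial.aeval_def, Polynomial.algebraMap_eq]
  rw [h1]
  have h2 := MvPolynomial.eval₂_comp_left (Polynomial.evalRingHom t) Polynomial.C q P
  simp only [Polynomial.coe_evalRingHom] at h2
  rw [h2]
  have h3 : (Polynomial.evalRingHom t).comp Polynomial.C = RingHom.id ℝ := by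
    ext r
    simp
  rw [h3]
  rfl

open MvPolynomial in
lemma eval_smul_of_homog {n : ℕ} {F : MvPolynomial (Fin 2) ℝ} (hF : F.IsHomogeneous n)
    (c : ℝ) (v : Fin 2 → ℝ) : eval (c • v) F = c ^ n * eval v F := by
  conv_lhs => rw [← F.support_sum_monomial_coeff]
  conv_rhs => rw [← F.support_sum_monomial_coeff]
  rw [map_sum, map_sum, Finset.mul_sum]
  apply Finset.sum_congr rfl
  intro m hm
  rw [MvPolynomial.eval_monomial, MvPolynomial.eval_monomial]
  have hdeg : ∑ i ∈ m.support, m i = n := by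
    have h := hF (mem_support_iff.mp hm)
    rw [← h, Finsupp.weight_apply, Finsupp.sum]
    simp [smul_eq_mul]
  have : (m.prod fun i k => (c • v) i ^ k) = c ^ n * m.prod fun i k => v i ^ k := by
    rw [Finsupp.prod, Finsupp.prod]
    simp only [Pi.smul_apply, smul_eq_mul, mul_pow]
    rw [Finset.prod_mul_distrib, Finset.prod_pow_eq_pow_sum, hdeg]
  rw [this]
  ring

open MvPolynomial in
/-- A binary polynomial vanishing whenever the second coordinate is nonzero vanishes. -/
lemma eq_zero_of_eval_zero_snd (P : MvPolynomial (Fin 2) ℝ)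
    (h : ∀ v : Fin 2 → ℝ, v 1 ≠ 0 → eval v P = 0) : P = 0 := by
  apply MvPolynomial.funext
  intro v
  rw [map_zero]
  by_cases hv : v 1 ≠ 0
  · exact h v hv
  push_neg at hv
  set q : Fin 2 → Polynomial ℝ := fun i => if i = 0 then Polynomial.C (v 0) else Polynomial.X
  have key : MvPolynomial.aeval q P = 0 := by
    apply Polynomial.eq_zero_of_infinite_isRoot
    have hsub : ({0}ᶜ : Set ℝ) ⊆ {y | Polynomial.IsRoot (MvPolynomial.aeval q P) y} := by
      intro y hy
      have hy0 : y ≠ 0 := hy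
      have : eval (fun i => Polynomial.eval y (q i)) P = 0 := by
        apply h
        simp [q, hy0]
      simpa [Polynomial.IsRoot.def, eval_aeval_eq] using this
    exact Set.Infinite.mono hsub ((Set.finite_singleton (0:ℝ)).infinite_compl)
  have hkey := congrArg (Polynomial.eval (v 1)) key
  rw [eval_aeval_eq] at hkey
  simp only [Polynomial.eval_zero] at hkey
  have hfun : (fun i => Polynomial.eval (v 1) (q i)) = v := by
    funext i
    fin_cases i <;> simp [q, hv]
  rw [hfun] at hkey
  exact hkey

open MvPolynomial in
lemma natDegree_dehom_le {n : ℕ} (F : MvPolynomial (Fin 2) ℝ) (hF : F.IsHomogeneous n) :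
    (MvPolynomial.aeval (fun i : Fin 2 => if i = 0 then (Polynomial.X : Polynomial ℝ) else 1) F).natDegree
      ≤ n := by
  conv_lhs => rw [← F.support_sum_monomial_coeff]
  rw [map_sum]
  apply Polynomial.natDegree_sum_le_of_forall_le
  intro m hm
  rw [MvPolynomial.aeval_monomial]
  apply le_trans (Polynomial.natDegree_mul_le)
  have h1 : (algebraMap ℝ (Polynomial ℝ) (coeff m F)).natDegree = 0 := by
    rw [Polynomial.algebraMap_eq]
    exact Polynomial.natDegree_C _
  rw [h1, zero_add]
  have hdeg : ∑ i ∈ m.support, m i = n := by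
    have h := hF (mem_support_iff.mp hm)
    rw [← h, Finsupp.weight_apply, Finsupp.sum]
    simp [smul_eq_mul]
  rw [Finsupp.prod]
  apply le_trans (Polynomial.natDegree_prod_le _ _)
  calc (∑ i ∈ m.support, ((if i = 0 then (Polynomial.X : Polynomial ℝ) else 1) ^ m i).natDegree)
      ≤ ∑ i ∈ m.support, m i := by
        apply Finset.sum_le_sum
        intro i _
        rw [Polynomial.natDegree_pow]
        by_cases hi : i = 0 <;> simp [hi]
    _ = n := hdeg

lemma coeff_sq_add_sq_ne_zero (g h : Polynomial ℝ) (hg : g ≠ 0)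
    (hgh : h.natDegree ≤ g.natDegree) :
    (g ^ 2 + h ^ 2).coeff (2 * g.natDegree) ≠ 0 := by
  have h1 : (g ^ 2).coeff (2 * g.natDegree) = g.leadingCoeff ^ 2 := by
    rw [sq, two_mul, Polynomial.coeff_mul_degree_add_degree, sq]
  have h2 : (h ^ 2).coeff (2 * g.natDegree) = (h.coeff g.natDegree) ^ 2 := by
    rcases eq_or_lt_of_le hgh with heq | hlt
    · rw [sq, two_mul]
      conv_lhs => rw [← heq]
      rw [Polynomial.coeff_mul_degree_add_degree, ← heq, sq]
      rfl
    · have e1 : (h ^ 2).coeff (2 * g.natDegree) = 0 :=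
        Polynomial.coeff_eq_zero_of_natDegree_lt (by
          have := Polynomial.natDegree_pow h 2
          omega)
      have e2 : h.coeff g.natDegree = 0 := Polynomial.coeff_eq_zero_of_natDegree_lt hlt
      rw [e1, e2]
      simp
  rw [Polynomial.coeff_add, h1, h2]
  have hlc : g.leadingCoeff ≠ 0 := Polynomial.leadingCoeff_ne_zero.mpr hg
  positivity

lemma two_natDegree_le_sq_add_sq (g h : Polynomial ℝ) (hg : g ≠ 0) :
    2 * g.natDegree ≤ (g ^ 2 + h ^ 2).natDegree := by
  rcases le_or_gt h.natDegree g.natDegree with hle | hlt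
  · exact Polynomial.le_natDegree_of_ne_zero (coeff_sq_add_sq_ne_zero g h hg hle)
  · have hh : h ≠ 0 := by
      intro h0
      rw [h0, Polynomial.natDegree_zero] at hlt
      omega
    have key := Polynomial.le_natDegree_of_ne_zero (coeff_sq_add_sq_ne_zero h g hh hlt.le)
    have hcomm : (h ^ 2 + g ^ 2) = (g ^ 2 + h ^ 2) := by ring
    rw [hcomm] at key
    omega

lemma prod_linear_forms : ∀ (d : ℕ) (c : ℝ) (s : Multiset ℝ), s.card ≤ d → (1 ≤ d ∨ c = 1) →
    ∃ a b : Fin d → ℝ,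
      (∏ i, (MvPolynomial.C (a i) * MvPolynomial.X 0 + MvPolynomial.C (b i) * MvPolynomial.X 1)
          : MvPolynomial (Fin 2) ℝ) =
        MvPolynomial.C c
          * (s.map fun r => (MvPolynomial.X 0 : MvPolynomial (Fin 2) ℝ)
              - MvPolynomial.C r * MvPolynomial.X 1).prod
          * MvPolynomial.X 1 ^ (d - Multiset.card s) := by
  intro d
  induction d with
  | zero =>
    intro c s hcard hc
    rcases hc with hc | rfl
    · omega
    have hs : s = 0 := Multiset.card_eq_zero.mp (le_antisymm hcard (Nat.zero_le _))
    subst hs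
    exact ⟨Fin.elim0, Fin.elim0, by simp⟩
  | succ d IH =>
    intro c s hcard hc
    by_cases hs : s = 0
    · subst hs
      obtain ⟨a', b', hab⟩ := IH 1 0 (by simp) (Or.inr rfl)
      refine ⟨Fin.cons 0 a', Fin.cons c b', ?_⟩
      rw [Fin.prod_univ_succ]
      simp only [Fin.cons_zero, Fin.cons_succ]
      rw [hab]
      simp only [Multiset.map_zero, Multiset.prod_zero, Multiset.card_zero, map_zero,
        Nat.sub_zero, map_one]
      ring
    · obtain ⟨r, hr⟩ := Multiset.exists_mem_of_ne_zero hs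
      obtain ⟨t, ht⟩ : ∃ t, s = r ::ₘ t := ⟨s.erase r, (Multiset.cons_erase hr).symm⟩
      subst ht
      have hcard' : t.card ≤ d := by
        rw [Multiset.card_cons] at hcard
        omega
      obtain ⟨a', b', hab⟩ := IH 1 t hcard' (Or.inr rfl)
      refine ⟨Fin.cons c a', Fin.cons (-c * r) b', ?_⟩
      rw [Fin.prod_univ_succ]
      simp only [Fin.cons_zero, Fin.cons_succ]
      rw [hab, Multiset.map_cons, Multiset.prod_cons, Multiset.card_cons]
      have hexp : d - t.card = d + 1 - (t.card + 1) := by omega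
      rw [← hexp, show (-c * r) = -(c * r) by ring, map_neg, map_mul, map_one]
      set PR := (Multiset.map
        (fun r => (MvPolynomial.X 0 : MvPolynomial (Fin 2) ℝ)
          - MvPolynomial.C r * MvPolynomial.X 1) t).prod with hPR
      ring

open MvPolynomial in
/-- Builder: homogenize a split real polynomial of degree ≤ d into a binary form. -/
lemma builder (d : ℕ) (hd : 1 ≤ d) (p : Polynomial ℝ) (hs : p.Splits)
    (hdeg : p.natDegree ≤ d) :
    ∃ G : MvPolynomial (Fin 2) ℝ,
      (G = 0 ∨ (G.IsHomogeneous d ∧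
        ∃ a b : Fin d → ℝ, G = ∏ i, (MvPolynomial.C (a i) * MvPolynomial.X 0
          + MvPolynomial.C (b i) * MvPolynomial.X 1))) ∧
      G.IsHomogeneous d ∧
      (∀ t : ℝ, MvPolynomial.eval (fun i : Fin 2 => if i = 0 then t else 1) G = p.eval t) := by
  by_cases hp : p = 0
  · exact ⟨0, Or.inl rfl, MvPolynomial.isHomogeneous_zero _ _ _, by simp [hp]⟩
  have hcard : p.roots.card ≤ d := by
    rw [Polynomial.splits_iff_card_roots.mp hs]
    exact hdeg
  obtain ⟨a, b, hab⟩ := prod_linear_forms d p.leadingCoeff p.roots hcard (Or.inl hd)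
  refine ⟨∏ i, (MvPolynomial.C (a i) * MvPolynomial.X 0 + MvPolynomial.C (b i) * MvPolynomial.X 1),
    Or.inr ⟨?_, a, b, rfl⟩, ?_, ?_⟩
  · -- homogeneous
    have := MvPolynomial.IsHomogeneous.prod (Finset.univ : Finset (Fin d))
      (fun i => MvPolynomial.C (a i) * MvPolynomial.X 0 + MvPolynomial.C (b i) * MvPolynomial.X 1)
      (fun _ => 1)
      (fun i _ => ((MvPolynomial.isHomogeneous_C_mul_X (a i) (0 : Fin 2)).add
        (MvPolynomial.isHomogeneous_C_mul_X (b i) (1 : Fin 2))))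
    simpa using this
  · have := MvPolynomial.IsHomogeneous.prod (Finset.univ : Finset (Fin d))
      (fun i => MvPolynomial.C (a i) * MvPolynomial.X 0 + MvPolynomial.C (b i) * MvPolynomial.X 1)
      (fun _ => 1)
      (fun i _ => ((MvPolynomial.isHomogeneous_C_mul_X (a i) (0 : Fin 2)).add
        (MvPolynomial.isHomogeneous_C_mul_X (b i) (1 : Fin 2))))
    simpa using this
  · intro t
    rw [hab]
    conv_rhs => rw [hs.eq_prod_roots]
    rw [map_mul, map_mul, map_pow]
    rw [Polynomial.eval_mul, Polynomial.eval_multiset_prod]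
    rw [MvPolynomial.eval_C, Polynomial.eval_C]
    have h1 : MvPolynomial.eval (fun i : Fin 2 => if i = 0 then t else (1:ℝ))
        (MvPolynomial.X 1) = 1 := by simp
    rw [map_multiset_prod, Multiset.map_map, Multiset.map_map, h1, one_pow, mul_one]
    congr 1
    apply congrArg
    apply Multiset.map_congr rfl
    intro r _
    simp

end OneVarHelpers

open MvPolynomial

/-- Carathéodory number of nonnegative binary forms is 2: every nonnegative
binary form of degree `2d` is a sum of two squares of degree-`d` forms, each
of which is zero or a product of real linear forms (i.e. an extreme point). -/
theorem caratheodory_binary_forms (d : ℕ) (hd : 1 ≤ d)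
    (F : MvPolynomial (Fin 2) ℝ)
    (hF : F.IsHomogeneous (2 * d))
    (hpos : ∀ x : Fin 2 → ℝ, 0 ≤ eval x F) :
    ∃ G H : MvPolynomial (Fin 2) ℝ,
      (G = 0 ∨ (G.IsHomogeneous d ∧
        ∃ a b : Fin d → ℝ, G = ∏ i, (C (a i) * X 0 + C (b i) * X 1))) ∧
      (H = 0 ∨ (H.IsHomogeneous d ∧
        ∃ a b : Fin d → ℝ, H = ∏ i, (C (a i) * X 0 + C (b i) * X 1))) ∧
      F = G ^ 2 + H ^ 2 := by
  classical
  set f := MvPolynomial.aeval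
    (fun i : Fin 2 => if i = 0 then (Polynomial.X : Polynomial ℝ) else 1) F with hfdef
  have hfeval : ∀ t : ℝ, f.eval t = MvPolynomial.eval (fun i : Fin 2 => if i = 0 then t else 1) F := by
    intro t
    rw [hfdef, eval_aeval_eq]
    have : (fun i : Fin 2 => Polynomial.eval t (if i = 0 then (Polynomial.X : Polynomial ℝ) else 1))
        = fun i : Fin 2 => if i = 0 then t else 1 := by
      funext i
      fin_cases i <;> simp
    rw [this]
  have hfpos : ∀ t, 0 ≤ f.eval t := fun t => by rw [hfeval t]; exact hpos _
  obtain ⟨g, h, hgh, hgs, hhs⟩ := nonneg_sum_two_squares f hfpos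
  have hfdeg : f.natDegree ≤ 2 * d := natDegree_dehom_le F hF
  have hgdeg : g.natDegree ≤ d := by
    by_cases hg0 : g = 0
    · simp [hg0]
    · have := two_natDegree_le_sq_add_sq g h hg0
      rw [← hgh] at this
      omega
  have hhdeg : h.natDegree ≤ d := by
    by_cases hh0 : h = 0
    · simp [hh0]
    · have := two_natDegree_le_sq_add_sq h g hh0
      have hcomm : (h ^ 2 + g ^ 2) = (g ^ 2 + h ^ 2) := by ring
      rw [hcomm, ← hgh] at this
      omega
  obtain ⟨G, hGform, hGhom, hGeval⟩ := builder d hd g hgs hgdeg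
  obtain ⟨H, hHform, hHhom, hHeval⟩ := builder d hd h hhs hhdeg
  refine ⟨G, H, hGform, hHform, ?_⟩
  have key : ∀ v : Fin 2 → ℝ, v 1 ≠ 0 →
      MvPolynomial.eval v (F - (G ^ 2 + H ^ 2)) = 0 := by
    intro v hv
    set w : Fin 2 → ℝ := fun i => if i = 0 then v 0 / v 1 else 1 with hw
    have hsmul : v = v 1 • w := by
      funext i
      fin_cases i
      · simp only [hw, Pi.smul_apply, smul_eq_mul]
        norm_num
        field_simp
      · simp [hw]
    have hFv : MvPolynomial.eval v F = (v 1) ^ (2 * d) * f.eval (v 0 / v 1) := by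
      rw [hfeval]
      conv_lhs => rw [hsmul]
      rw [eval_smul_of_homog hF]
    have hGv : MvPolynomial.eval v G = (v 1) ^ d * g.eval (v 0 / v 1) := by
      rw [← hGeval]
      conv_lhs => rw [hsmul]
      rw [eval_smul_of_homog hGhom]
    have hHv : MvPolynomial.eval v H = (v 1) ^ d * h.eval (v 0 / v 1) := by
      rw [← hHeval]
      conv_lhs => rw [hsmul]
      rw [eval_smul_of_homog hHhom]
    rw [map_sub, map_add, map_pow, map_pow, hFv, hGv, hHv, hgh]
    rw [Polynomial.eval_add, Polynomial.eval_pow, Polynomial.eval_pow]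
    rw [two_mul, pow_add]
    ring
  have hzero : F - (G ^ 2 + H ^ 2) = 0 := eq_zero_of_eval_zero_snd _ key
  exact sub_eq_zero.mp hzero
end

section
/- For every d ≥ 2, the perfect square (x^d + y^d)² is a nonnegative binary form of degree 2d that is NOT an extreme point of the cone P_{2,2d}: there exist F₁, F₂ ∈ P_{2,2d} with (x^d + y^d)² = F₁ + F₂ such that neither F₁ nor F₂ is a nonnegative scalar multiple of (x^d + y^d)². -/
open MvPolynomial

lemma homog_aux (n : ℕ) :
    (X 0 ^ n + X 1 ^ n : MvPolynomial (Fin 2) ℝ).IsHomogeneous n := by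
  have h0 : (X 0 ^ n : MvPolynomial (Fin 2) ℝ).IsHomogeneous n := by
    simpa using (isHomogeneous_X ℝ (0 : Fin 2)).pow n
  have h1 : (X 1 ^ n : MvPolynomial (Fin 2) ℝ).IsHomogeneous n := by
    simpa using (isHomogeneous_X ℝ (1 : Fin 2)).pow n
  exact h0.add h1

lemma homog_X_pow (i : Fin 2) (n : ℕ) :
    (X i ^ n : MvPolynomial (Fin 2) ℝ).IsHomogeneous n := by
  simpa using (isHomogeneous_X ℝ i).pow n

/-- For `d ≥ 2`, the perfect square `(x^d + y^d)²` is a nonnegative binary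
form of degree `2d` which is not an extreme point of the cone of nonnegative
binary forms. -/
theorem perfect_square_not_extreme (d : ℕ) (hd : 2 ≤ d) :
    ((X 0 ^ d + X 1 ^ d : MvPolynomial (Fin 2) ℝ) ^ 2).IsHomogeneous (2 * d) ∧
    (∀ x : Fin 2 → ℝ, 0 ≤ eval x ((X 0 ^ d + X 1 ^ d : MvPolynomial (Fin 2) ℝ) ^ 2)) ∧
    ∃ F₁ F₂ : MvPolynomial (Fin 2) ℝ,
      F₁.IsHomogeneous (2 * d) ∧ (∀ x : Fin 2 → ℝ, 0 ≤ eval x F₁) ∧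
      F₂.IsHomogeneous (2 * d) ∧ (∀ x : Fin 2 → ℝ, 0 ≤ eval x F₂) ∧
      (X 0 ^ d + X 1 ^ d : MvPolynomial (Fin 2) ℝ) ^ 2 = F₁ + F₂ ∧
      (¬ ∃ c : ℝ, 0 ≤ c ∧
        F₁ = c • ((X 0 ^ d + X 1 ^ d : MvPolynomial (Fin 2) ℝ) ^ 2)) ∧
      (¬ ∃ c : ℝ, 0 ≤ c ∧
        F₂ = c • ((X 0 ^ d + X 1 ^ d : MvPolynomial (Fin 2) ℝ) ^ 2)) := by
  obtain ⟨m, rfl⟩ : ∃ m, d = m + 2 := ⟨d - 2, by omega⟩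
  refine ⟨?_, ?_, ?_⟩
  · have := (homog_aux (m+2)).pow 2
    convert this using 1
    ring
  · intro x
    simp only [eval_pow]
    exact sq_nonneg _
  · refine ⟨(X 0 * X 1 ^ (m+1) + X 0 ^ (m+1) * X 1) ^ 2,
      (X 0 ^ 2 - X 1 ^ 2) * (X 0 ^ (2*m+2) - X 1 ^ (2*m+2)), ?_, ?_, ?_, ?_, ?_, ?_, ?_⟩
    · -- F₁ homogeneous
      have h1 : (X 0 * X 1 ^ (m+1) : MvPolynomial (Fin 2) ℝ).IsHomogeneous (m+2) := by
        have := (isHomogeneous_X ℝ (0 : Fin 2)).mul (homog_X_pow 1 (m+1))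
        convert this using 1
        omega
      have h2 : (X 0 ^ (m+1) * X 1 : MvPolynomial (Fin 2) ℝ).IsHomogeneous (m+2) := by
        have := (homog_X_pow 0 (m+1)).mul (isHomogeneous_X ℝ (1 : Fin 2))
        convert this using 1
      have := (h1.add h2).pow 2
      convert this using 1
      ring
    · intro x
      simp only [eval_pow]
      exact sq_nonneg _
    · -- F₂ homogeneous
      have h1 : (X 0 ^ 2 - X 1 ^ 2 : MvPolynomial (Fin 2) ℝ).IsHomogeneous 2 :=
        (homog_X_pow 0 2).sub (homog_X_pow 1 2)
      have h2 : (X 0 ^ (2*m+2) - X 1 ^ (2*m+2) : MvPolynomial (Fin 2) ℝ).IsHomogeneous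
          (2*m+2) := (homog_X_pow 0 (2*m+2)).sub (homog_X_pow 1 (2*m+2))
      have := h1.mul h2
      convert this using 1
      ring
    · intro x
      simp only [eval_mul, eval_sub, eval_pow, eval_X]
      set a := x 0
      set b := x 1
      have ha : a ^ (2*m+2) = (a ^ 2) ^ (m+1) := by rw [← pow_mul]; ring_nf
      have hb : b ^ (2*m+2) = (b ^ 2) ^ (m+1) := by rw [← pow_mul]; ring_nf
      rw [ha, hb]
      rcases le_total (b ^ 2) (a ^ 2) with h | h
      · exact mul_nonneg (by linarith)
          (by have := pow_le_pow_left₀ (sq_nonneg b) h (m+1); linarith)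
      · have hp := pow_le_pow_left₀ (sq_nonneg a) h (m+1)
        have := mul_nonneg (sub_nonneg.2 h) (sub_nonneg.2 hp)
        nlinarith [this]
    · ring
    · -- F₁ not a multiple
      rintro ⟨c, hc, h⟩
      have he0 := congrArg (eval (fun i : Fin 2 => if i = 0 then (1:ℝ) else 0)) h
      simp at he0
      -- he0 : 0 = c
      have hF : (X 0 * X 1 ^ (m+1) + X 0 ^ (m+1) * X 1 : MvPolynomial (Fin 2) ℝ) ^ 2
          = 0 := by rw [h, ← he0, zero_smul]
      have he1 := congrArg (eval (fun _ : Fin 2 => (1:ℝ))) hF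
      simp at he1
    · -- F₂ not a multiple
      rintro ⟨c, hc, h⟩
      have he1 := congrArg (eval (fun _ : Fin 2 => (1:ℝ))) h
      simp at he1
      -- should give 0 = c * 4 or similar
      have hc0 : c = 0 := by nlinarith [he1]
      have hF : ((X 0 ^ 2 - X 1 ^ 2) * (X 0 ^ (2*m+2) - X 1 ^ (2*m+2))
          : MvPolynomial (Fin 2) ℝ) = 0 := by rw [h, hc0, zero_smul]
      have he0 := congrArg (eval (fun i : Fin 2 => if i = 0 then (1:ℝ) else 0)) hF
      simp at he0
end
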